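/- arXiv:1104.2530 — 4 statements merged into one kernel-verified Lean document; each statement's English description precedes it below -/
import Mathlib

section
/- Let n, m be positive integers and λ ∈ ℂ. Let W := { (R^T Δ_m + Δ_n S, R^T Λ_m(λ) + Λ_n(λ) S) : S ∈ ℂ^{n×m}, R ∈ ℂ^{m×n} } ⊆ ℂ^{n×m} × ℂ^{n×m}, and let P := { (0, Y) : Y ∈ ℂ^{n×m}, Y_{ij} = 0 unless j = 1 and i ≤ min(n,m) }. Then ℂ^{n×m} × ℂ^{n×m} = W ⊕ P; in particular, every coset of W contains exactly one element of P, and W has codimension min(n,m). -/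
open Matrix

noncomputable section

/-- `Λ_n(λ)`: the `n × n` matrix with `(i,j)` entry `λ` if `i + j = n + 1`, `1` if
`i + j = n + 2`, and `0` otherwise (1-based indices). -/
def lamM (n : ℕ) (lam : ℂ) : Matrix (Fin n) (Fin n) ℂ :=
  Matrix.of fun i j =>
    if (i : ℕ) + 1 + ((j : ℕ) + 1) = n + 1 then lam
    else if (i : ℕ) + 1 + ((j : ℕ) + 1) = n + 2 then 1 else 0

/-- `Δ_n`: the `n × n` matrix with `(i,j)` entry `1` if `i + j = n + 1` and `0`
otherwise (1-based indices). -/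
def delM (n : ℕ) : Matrix (Fin n) (Fin n) ℂ :=
  Matrix.of fun i j => if (i : ℕ) + 1 + ((j : ℕ) + 1) = n + 1 then 1 else 0

/-- `F_n`: the `n × (n+1)` matrix with `F_n(i,j) = 1` exactly when `j = i`. -/
def FM (n : ℕ) : Matrix (Fin n) (Fin (n + 1)) ℂ :=
  Matrix.of fun i j => if (j : ℕ) = (i : ℕ) then 1 else 0

/-- `G_n`: the `n × (n+1)` matrix with `G_n(i,j) = 1` exactly when `j = i + 1`. -/
def GM (n : ℕ) : Matrix (Fin n) (Fin (n + 1)) ℂ :=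
  Matrix.of fun i j => if (j : ℕ) = (i : ℕ) + 1 then 1 else 0

/-- `L_n^{(1)} = [[0, F_nᵀ], [F_n, 0]]`, a symmetric `(2n+1) × (2n+1)` matrix. -/
def L1M (n : ℕ) : Matrix (Fin (2 * n + 1)) (Fin (2 * n + 1)) ℂ :=
  Matrix.reindex (finSumFinEquiv.trans (finCongr (by omega)))
    (finSumFinEquiv.trans (finCongr (by omega)))
    (Matrix.fromBlocks 0 (FM n)ᵀ (FM n) 0)

/-- `L_n^{(2)} = [[0, G_nᵀ], [G_n, 0]]`, a symmetric `(2n+1) × (2n+1)` matrix. -/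
def L2M (n : ℕ) : Matrix (Fin (2 * n + 1)) (Fin (2 * n + 1)) ℂ :=
  Matrix.reindex (finSumFinEquiv.trans (finCongr (by omega)))
    (finSumFinEquiv.trans (finCongr (by omega)))
    (Matrix.fromBlocks 0 (GM n)ᵀ (GM n) 0)

theorem lamM_isSymm (n : ℕ) (lam : ℂ) : (lamM n lam).IsSymm := by
  unfold Matrix.IsSymm lamM
  ext i j
  simp only [Matrix.transpose_apply, Matrix.of_apply]
  split_ifs <;> first | rfl | omega

theorem delM_isSymm (n : ℕ) : (delM n).IsSymm := by
  unfold Matrix.IsSymm delM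
  ext i j
  simp only [Matrix.transpose_apply, Matrix.of_apply]
  split_ifs <;> first | rfl | omega

theorem L1M_isSymm (n : ℕ) : (L1M n).IsSymm := by
  unfold Matrix.IsSymm L1M
  rw [Matrix.transpose_reindex, Matrix.fromBlocks_transpose]
  simp

theorem L2M_isSymm (n : ℕ) : (L2M n).IsSymm := by
  unfold Matrix.IsSymm L2M
  rw [Matrix.transpose_reindex, Matrix.fromBlocks_transpose]
  simp

/-- The type of canonical summands: `H_k(λ)`, `K_k`, `L_k`. -/
inductive CanType where
  | H : ℕ → ℂ → CanType
  | K : ℕ → CanType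
  | L : ℕ → CanType

/-- The size of a canonical pair. -/
def CanType.size : CanType → ℕ
  | .H k _ => k
  | .K k => k
  | .L k => 2 * k + 1

/-- The size parameter of a canonical pair. -/
def CanType.param : CanType → ℕ
  | .H k _ => k
  | .K k => k
  | .L k => k

/-- The first matrix of a canonical pair. -/
def CanType.A : (c : CanType) → Matrix (Fin c.size) (Fin c.size) ℂ
  | .H k _ => delM k
  | .K k => lamM k 0
  | .L k => L1M k

/-- The second matrix of a canonical pair. -/
def CanType.B : (c : CanType) → Matrix (Fin c.size) (Fin c.size) ℂ
  | .H k lam => lamM k lam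
  | .K k => delM k
  | .L k => L2M k

/-- Congruence of pairs of square complex matrices (over possibly different index
types): `(A', B') = (Sᵀ A S, Sᵀ B S)` for some invertible `S`. -/
def CongruentPairs {ι κ : Type} [Fintype ι] [Fintype κ] [DecidableEq ι] [DecidableEq κ]
    (p : Matrix ι ι ℂ × Matrix ι ι ℂ) (q : Matrix κ κ ℂ × Matrix κ κ ℂ) : Prop :=
  ∃ S : Matrix ι κ ℂ, (∃ T : Matrix κ ι ℂ, S * T = 1 ∧ T * S = 1) ∧
    q.1 = Sᵀ * p.1 * S ∧ q.2 = Sᵀ * p.2 * S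

/-- The linear map `(S, R) ↦ (Rᵀ A_j + A_i S, Rᵀ B_j + B_i S)`. -/
def offMap {ι κ : Type} [Fintype ι] [Fintype κ] (Ai Bi : Matrix ι ι ℂ)
    (Aj Bj : Matrix κ κ ℂ) :
    (Matrix ι κ ℂ × Matrix κ ι ℂ) →ₗ[ℂ] (Matrix ι κ ℂ × Matrix ι κ ℂ) where
  toFun SR := (SR.2ᵀ * Aj + Ai * SR.1, SR.2ᵀ * Bj + Bi * SR.1)
  map_add' x y := by
    simp only [Prod.fst_add, Prod.snd_add, Matrix.transpose_add, Matrix.add_mul,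
      Matrix.mul_add, Prod.mk_add_mk, Prod.ext_iff]
    constructor <;> abel
  map_smul' c x := by
    simp only [Prod.smul_fst, Prod.smul_snd, Matrix.transpose_smul, Matrix.smul_mul,
      Matrix.mul_smul, RingHom.id_apply, Prod.smul_mk, smul_add]

/-- `W = {(Rᵀ A_j + A_i S, Rᵀ B_j + B_i S) : S, R}`. -/
def WSpace {ι κ : Type} [Fintype ι] [Fintype κ] (Ai Bi : Matrix ι ι ℂ)
    (Aj Bj : Matrix κ κ ℂ) : Submodule ℂ (Matrix ι κ ℂ × Matrix ι κ ℂ) :=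
  LinearMap.range (offMap Ai Bi Aj Bj)

/-- The space of pairs of (rectangular) matrices supported on given sets of positions. -/
def entryPattern {ι κ : Type} (S1 S2 : Set (ι × κ)) :
    Submodule ℂ (Matrix ι κ ℂ × Matrix ι κ ℂ) where
  carrier := {x | (∀ i j, (i, j) ∉ S1 → x.1 i j = 0) ∧ (∀ i j, (i, j) ∉ S2 → x.2 i j = 0)}
  add_mem' := by
    rintro a b ⟨ha1, ha2⟩ ⟨hb1, hb2⟩
    exact ⟨fun i j h => by show a.1 i j + b.1 i j = 0; rw [ha1 i j h, hb1 i j h, add_zero],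
      fun i j h => by show a.2 i j + b.2 i j = 0; rw [ha2 i j h, hb2 i j h, add_zero]⟩
  zero_mem' := ⟨fun _ _ _ => rfl, fun _ _ _ => rfl⟩
  smul_mem' := by
    rintro c a ⟨ha1, ha2⟩
    exact ⟨fun i j h => by show c * a.1 i j = 0; rw [ha1 i j h, mul_zero],
      fun i j h => by show c * a.2 i j = 0; rw [ha2 i j h, mul_zero]⟩


end

noncomputable section

namespace HHAux

open Finset

/-- Upper shift matrix. -/
def NU (n : ℕ) : Matrix (Fin n) (Fin n) ℂ :=
  Matrix.of fun i j => if (j : ℕ) = (i : ℕ) + 1 then 1 else 0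

variable {n m : ℕ}

lemma delM_apply (n : ℕ) (i j : Fin n) :
    delM n i j = if j = i.rev then 1 else 0 := by
  have hi := i.isLt; have hj := j.isLt
  have h1 : ((i : ℕ) + 1 + ((j : ℕ) + 1) = n + 1) ↔ j = i.rev := by
    rw [Fin.ext_iff, Fin.val_rev]; omega
  simp only [delM, Matrix.of_apply, h1]

lemma delM_apply' (n : ℕ) (i j : Fin n) :
    delM n i j = if i = j.rev then 1 else 0 := by
  rw [delM_apply]
  refine if_congr ?_ rfl rfl
  constructor
  · rintro rfl; rw [Fin.rev_rev]
  · rintro rfl; rw [Fin.rev_rev]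

lemma delM_mul_apply (A : Matrix (Fin n) (Fin m) ℂ) (i : Fin n) (j : Fin m) :
    (delM n * A) i j = A i.rev j := by
  rw [Matrix.mul_apply]
  simp only [delM_apply, ite_mul, one_mul, zero_mul]
  simp [Finset.sum_ite_eq']

lemma mul_delM_apply (A : Matrix (Fin n) (Fin m) ℂ) (i : Fin n) (j : Fin m) :
    (A * delM m) i j = A i j.rev := by
  rw [Matrix.mul_apply]
  simp only [delM_apply', mul_ite, mul_one, mul_zero]
  simp [Finset.sum_ite_eq']

lemma delM_mul_delM (n : ℕ) : delM n * delM n = 1 := by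
  ext i j
  rw [delM_mul_apply, delM_apply', Matrix.one_apply]
  exact if_congr Fin.rev_inj rfl rfl

lemma NUT_mul_apply (V : Matrix (Fin n) (Fin m) ℂ) (i : Fin n) (j : Fin m) :
    ((NU n)ᵀ * V) i j =
      if 1 ≤ (i : ℕ) then
        V ⟨(i : ℕ) - 1, Nat.lt_of_le_of_lt (Nat.sub_le _ _) i.isLt⟩ j
      else 0 := by
  rw [Matrix.mul_apply]
  by_cases h : 1 ≤ (i : ℕ)
  · rw [if_pos h]
    have hc : ∀ k : Fin n, (NU n)ᵀ i k =
        if k = (⟨(i : ℕ) - 1, Nat.lt_of_le_of_lt (Nat.sub_le _ _) i.isLt⟩ : Fin n)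
        then (1:ℂ) else 0 := by
      intro k
      simp only [NU, Matrix.transpose_apply, Matrix.of_apply]
      refine if_congr ?_ rfl rfl
      rw [Fin.ext_iff]
      simp only []
      omega
    simp only [hc, ite_mul, one_mul, zero_mul]
    simp [Finset.sum_ite_eq']
  · rw [if_neg h]
    apply Finset.sum_eq_zero
    intro k _
    have hne : ¬ ((i : ℕ) = (k : ℕ) + 1) := by omega
    simp [NU, hne]

lemma mul_NU_apply (A : Matrix (Fin n) (Fin m) ℂ) (i : Fin n) (j : Fin m) :
    (A * NU m) i j =
      if 1 ≤ (j : ℕ) then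
        A i ⟨(j : ℕ) - 1, Nat.lt_of_le_of_lt (Nat.sub_le _ _) j.isLt⟩
      else 0 := by
  rw [Matrix.mul_apply]
  by_cases h : 1 ≤ (j : ℕ)
  · rw [if_pos h]
    have hc : ∀ k : Fin m, NU m k j =
        if k = (⟨(j : ℕ) - 1, Nat.lt_of_le_of_lt (Nat.sub_le _ _) j.isLt⟩ : Fin m)
        then (1:ℂ) else 0 := by
      intro k
      simp only [NU, Matrix.of_apply]
      refine if_congr ?_ rfl rfl
      rw [Fin.ext_iff]
      simp only []
      omega
    simp only [hc, mul_ite, mul_one, mul_zero]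
    simp [Finset.sum_ite_eq']
  · rw [if_neg h]
    apply Finset.sum_eq_zero
    intro k _
    have hne : ¬ ((j : ℕ) = (k : ℕ) + 1) := by omega
    simp [NU, hne]

lemma lamM_eq_left (n : ℕ) (lam : ℂ) :
    lamM n lam = lam • delM n + delM n * NU n := by
  ext i j
  rw [Matrix.add_apply, Matrix.smul_apply, delM_mul_apply]
  have hi := i.isLt; have hj := j.isLt
  have hr : ((i.rev : ℕ)) = n - ((i : ℕ) + 1) := Fin.val_rev i
  simp only [lamM, delM, NU, Matrix.of_apply, smul_eq_mul, hr]
  split_ifs <;> first | ring1 | omega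

lemma lamM_eq_right (n : ℕ) (lam : ℂ) :
    lamM n lam = lam • delM n + (NU n)ᵀ * delM n := by
  have h := congrArg Matrix.transpose (lamM_eq_left n lam)
  rw [(lamM_isSymm n lam).eq] at h
  rw [h, Matrix.transpose_add, Matrix.transpose_smul, Matrix.transpose_mul,
    (delM_isSymm n).eq]

lemma mul_lamM (lam : ℂ) (B : Matrix (Fin n) (Fin m) ℂ) :
    B * lamM m lam = lam • (B * delM m) + (B * delM m) * NU m := by
  rw [lamM_eq_left, Matrix.mul_add, Matrix.mul_smul, Matrix.mul_assoc]

lemma lamM_mul (lam : ℂ) (S : Matrix (Fin n) (Fin m) ℂ) :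
    lamM n lam * S = lam • (delM n * S) + (NU n)ᵀ * (delM n * S) := by
  rw [lamM_eq_right, Matrix.add_mul, Matrix.smul_mul, Matrix.mul_assoc]

lemma mem_W_iff (lam : ℂ) (X Y : Matrix (Fin n) (Fin m) ℂ) :
    (X, Y) ∈ WSpace (delM n) (lamM n lam) (delM m) (lamM m lam) ↔
      ∃ V : Matrix (Fin n) (Fin m) ℂ,
        Y = lam • X + X * NU m + ((NU n)ᵀ * V - V * NU m) := by
  rw [WSpace, LinearMap.mem_range]
  constructor
  · rintro ⟨⟨S, R⟩, hSR⟩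
    simp only [offMap, LinearMap.coe_mk, AddHom.coe_mk, Prod.mk.injEq] at hSR
    obtain ⟨h1, h2⟩ := hSR
    refine ⟨delM n * S, ?_⟩
    have h3 : Rᵀ * delM m = X - delM n * S := by rw [← h1]; abel
    rw [← h2, mul_lamM, lamM_mul, h3]
    simp only [smul_sub, Matrix.sub_mul]
    abel
  · rintro ⟨V, hV⟩
    refine ⟨(delM n * V, ((X - V) * delM m)ᵀ), ?_⟩
    have e1 : ((X - V) * delM m) * delM m = X - V := by
      rw [Matrix.mul_assoc, delM_mul_delM, Matrix.mul_one]
    have e2 : delM n * (delM n * V) = V := by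
      rw [← Matrix.mul_assoc, delM_mul_delM, Matrix.one_mul]
    simp only [offMap, LinearMap.coe_mk, AddHom.coe_mk, Prod.mk.injEq,
      Matrix.transpose_transpose]
    constructor
    · rw [e1, e2]; abel
    · rw [mul_lamM, lamM_mul, e1, e2, hV]
      simp only [smul_sub, Matrix.sub_mul]
      abel

/-- Extension of a matrix to an `ℕ`-indexed function, by zero. -/
def extZ (A : Matrix (Fin n) (Fin m) ℂ) : ℕ → ℕ → ℂ := fun i j =>
  if h : i < n ∧ j < m then A ⟨i, h.1⟩ ⟨j, h.2⟩ else 0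

lemma extZ_eq (A : Matrix (Fin n) (Fin m) ℂ) {i j : ℕ} (hi : i < n) (hj : j < m) :
    extZ A i j = A ⟨i, hi⟩ ⟨j, hj⟩ := by
  simp [extZ, hi, hj]

lemma extZ_apply (A : Matrix (Fin n) (Fin m) ℂ) (i : Fin n) (j : Fin m) :
    extZ A (i : ℕ) (j : ℕ) = A i j := by
  rw [extZ_eq A i.isLt j.isLt]

lemma T_entry (V : Matrix (Fin n) (Fin m) ℂ) (i : Fin n) (j : Fin m) :
    ((NU n)ᵀ * V - V * NU m) i j
      = (if 1 ≤ (i : ℕ) then extZ V ((i : ℕ) - 1) (j : ℕ) else 0)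
        - (if 1 ≤ (j : ℕ) then extZ V (i : ℕ) ((j : ℕ) - 1) else 0) := by
  have hi := i.isLt; have hj := j.isLt
  rw [Matrix.sub_apply, NUT_mul_apply, mul_NU_apply]
  congr 1
  · split_ifs with h
    · rw [extZ_eq V (by omega) (by omega)]
    · rfl
  · split_ifs with h
    · rw [extZ_eq V (by omega) (by omega)]
    · rfl

lemma T_level_sum (V : Matrix (Fin n) (Fin m) ℂ) {s : ℕ} (hs : s < min n m) :
    ∑ k ∈ Finset.range (s + 1), extZ ((NU n)ᵀ * V - V * NU m) k (s - k) = 0 := by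
  have hsn : s < n := lt_of_lt_of_le hs (min_le_left n m)
  have hsm : s < m := lt_of_lt_of_le hs (min_le_right n m)
  set f : ℕ → ℂ := fun k => if 1 ≤ k ∧ k ≤ s then extZ V (k - 1) (s - k) else 0 with hf
  have key : ∀ k ∈ Finset.range (s + 1),
      extZ ((NU n)ᵀ * V - V * NU m) k (s - k) = f k - f (k + 1) := by
    intro k hk
    rw [Finset.mem_range] at hk
    have hkn : k < n := by omega
    have hskm : s - k < m := by omega
    rw [extZ_eq _ hkn hskm, T_entry]
    simp only [hf]
    congr 1
    · split_ifs with h1 h2 <;> first | rfl | omega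
    · have hss : s - k - 1 = s - (k + 1) := by omega
      rw [hss]
      split_ifs with h1 h2 <;> first | rfl | omega
  rw [Finset.sum_congr rfl key, Finset.sum_range_sub']
  simp [hf]

lemma mem_entryPattern_iff {S1 S2 : Set (Fin n × Fin m)}
    {x : Matrix (Fin n) (Fin m) ℂ × Matrix (Fin n) (Fin m) ℂ} :
    x ∈ entryPattern S1 S2 ↔
      (∀ i j, (i, j) ∉ S1 → x.1 i j = 0) ∧ (∀ i j, (i, j) ∉ S2 → x.2 i j = 0) :=
  Iff.rfl

/-- The disjointness statement. -/
lemma W_disjoint_P (lam : ℂ) :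
    Disjoint (WSpace (delM n) (lamM n lam) (delM m) (lamM m lam))
      (entryPattern (∅ : Set (Fin n × Fin m))
        {pq : Fin n × Fin m | (pq.2 : ℕ) = 0 ∧ (pq.1 : ℕ) + 1 ≤ min n m}) := by
  rw [Submodule.disjoint_def]
  rintro ⟨X, Y⟩ hW hP
  obtain ⟨hP1, hP2⟩ := mem_entryPattern_iff.mp hP
  have hX : X = 0 := by
    ext i j; exact hP1 i j (Set.notMem_empty _)
  subst hX
  obtain ⟨V, hV⟩ := (mem_W_iff lam 0 Y).mp hW
  simp only [smul_zero, Matrix.zero_mul, add_zero, zero_add] at hV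
  have hY : Y = 0 := by
    ext i j
    by_cases hpat : ((j : ℕ) = 0 ∧ (i : ℕ) + 1 ≤ min n m)
    · have hs : (i : ℕ) < min n m := by omega
      have hsum := T_level_sum V hs
      rw [← hV] at hsum
      have hterm : ∀ k ∈ Finset.range ((i : ℕ) + 1), k ≠ (i : ℕ) →
          extZ Y k ((i : ℕ) - k) = 0 := by
        intro k hk hne
        rw [Finset.mem_range] at hk
        by_cases hr : k < n ∧ (i : ℕ) - k < m
        · rw [extZ_eq Y hr.1 hr.2]
          apply hP2
          simp only [Set.mem_setOf_eq, not_and]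
          intro hc
          exfalso
          have hc' : (i : ℕ) - k = 0 := hc
          omega
        · simp only [extZ]
          rw [dif_neg hr]
      rw [Finset.sum_eq_single_of_mem _ (Finset.self_mem_range_succ _) hterm,
        Nat.sub_self] at hsum
      rw [← extZ_apply Y i j, hpat.1]
      exact hsum
    · exact hP2 i j (by simpa only [Set.mem_setOf_eq] using hpat)
  rw [hY]
  rfl

/-- `termZ Z s k = Z(k, s-k)` extended by zero. -/
def termZ (Z : Matrix (Fin n) (Fin m) ℂ) (s k : ℕ) : ℂ :=
  if k ≤ s then extZ Z k (s - k) else 0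

lemma termZ_of_gt (Z : Matrix (Fin n) (Fin m) ℂ) {s k : ℕ} (h : s < k) :
    termZ Z s k = 0 := if_neg (by omega)

lemma termZ_eq (Z : Matrix (Fin n) (Fin m) ℂ) {s k : ℕ} (h : k ≤ s) :
    termZ Z s k = extZ Z k (s - k) := if_pos h

lemma sum_Ico_termZ_zero (Z : Matrix (Fin n) (Fin m) ℂ) {s a : ℕ} (h : s < a) (b : ℕ) :
    ∑ k ∈ Finset.Ico a b, termZ Z s k = 0 :=
  Finset.sum_eq_zero fun k hk =>
    termZ_of_gt Z (by rw [Finset.mem_Ico] at hk; omega)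

/-- The explicit solution matrix, as an `ℕ`-indexed function. -/
def Vf (Z : Matrix (Fin n) (Fin m) ℂ) (i j : ℕ) : ℂ :=
  if i + j + 1 < m then -∑ k ∈ Finset.range (i + 1), termZ Z (i + j + 1) k
  else ∑ k ∈ Finset.Ico (i + 1) n, termZ Z (i + j + 1) k

def Vmat (Z : Matrix (Fin n) (Fin m) ℂ) : Matrix (Fin n) (Fin m) ℂ :=
  Matrix.of fun i j => Vf Z (i : ℕ) (j : ℕ)

def Dmat (Z : Matrix (Fin n) (Fin m) ℂ) : Matrix (Fin n) (Fin m) ℂ :=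
  Matrix.of fun i j =>
    if (j : ℕ) = 0 ∧ (i : ℕ) + 1 ≤ min n m then ∑ k ∈ Finset.range n, termZ Z (i : ℕ) k
    else 0

lemma core (Z : Matrix (Fin n) (Fin m) ℂ) {i j : ℕ} (hi : i < n) (hj : j < m) :
    (if 1 ≤ i then Vf Z (i - 1) j else 0) - (if 1 ≤ j then Vf Z i (j - 1) else 0)
      = extZ Z i j -
        (if j = 0 ∧ i + 1 ≤ min n m then ∑ k ∈ Finset.range n, termZ Z i k else 0) := by
  by_cases hj0 : j = 0
  · subst hj0
    rw [if_neg (show ¬ ((1:ℕ) ≤ 0) by omega), sub_zero]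
    by_cases him : i < m
    · rw [if_pos (show (0:ℕ) = 0 ∧ i + 1 ≤ min n m from ⟨rfl, by omega⟩)]
      have hsum : ∑ k ∈ Finset.range n, termZ Z i k
          = (∑ k ∈ Finset.range i, termZ Z i k) + extZ Z i 0 := by
        have h1 : ∑ k ∈ Finset.range n, termZ Z i k
            = (∑ k ∈ Finset.range (i + 1), termZ Z i k)
              + ∑ k ∈ Finset.Ico (i + 1) n, termZ Z i k := by
          rw [Finset.range_eq_Ico, Finset.range_eq_Ico]
          exact (Finset.sum_Ico_consecutive (fun k => termZ Z i k) (show 0 ≤ i + 1 by omega) (show i + 1 ≤ n by omega)).symm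
        rw [h1, sum_Ico_termZ_zero Z (by omega), add_zero, Finset.sum_range_succ,
          termZ_eq Z (le_refl i), Nat.sub_self]
      rw [hsum]
      by_cases hi1 : 1 ≤ i
      · rw [if_pos hi1]
        have hVf : Vf Z (i - 1) 0 = -∑ k ∈ Finset.range i, termZ Z i k := by
          simp only [Vf, show i - 1 + 0 + 1 = i from by omega,
            show i - 1 + 1 = i from by omega]
          rw [if_pos him]
        rw [hVf]; ring
      · rw [if_neg hi1]
        have hi0 : i = 0 := by omega
        subst hi0
        simp
    · rw [if_neg (show ¬ ((0:ℕ) = 0 ∧ i + 1 ≤ min n m) by omega), sub_zero]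
      have hi1 : 1 ≤ i := by omega
      rw [if_pos hi1]
      have hVf : Vf Z (i - 1) 0 = ∑ k ∈ Finset.Ico i n, termZ Z i k := by
        simp only [Vf, show i - 1 + 0 + 1 = i from by omega,
          show i - 1 + 1 = i from by omega]
        rw [if_neg him]
      rw [hVf, Finset.sum_eq_sum_Ico_succ_bot hi, termZ_eq Z (le_refl i),
        Nat.sub_self, sum_Ico_termZ_zero Z (by omega), add_zero]
  · rw [if_neg (show ¬ (j = 0 ∧ i + 1 ≤ min n m) from fun h => hj0 h.1), sub_zero]
    have hj1 : 1 ≤ j := by omega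
    rw [if_pos hj1]
    by_cases htop : i + j < m
    · by_cases hi1 : 1 ≤ i
      · rw [if_pos hi1]
        have e1 : Vf Z (i - 1) j = -∑ k ∈ Finset.range i, termZ Z (i + j) k := by
          simp only [Vf, show i - 1 + j + 1 = i + j from by omega,
            show i - 1 + 1 = i from by omega]
          rw [if_pos htop]
        have e2 : Vf Z i (j - 1) = -∑ k ∈ Finset.range (i + 1), termZ Z (i + j) k := by
          simp only [Vf, show i + (j - 1) + 1 = i + j from by omega]
          rw [if_pos htop]
        rw [e1, e2, Finset.sum_range_succ, termZ_eq Z (by omega),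
          show i + j - i = j from by omega]
        ring
      · rw [if_neg hi1]
        have hi0 : i = 0 := by omega
        subst hi0
        have e2 : Vf Z 0 (j - 1) = -∑ k ∈ Finset.range 1, termZ Z j k := by
          simp only [Vf, show 0 + (j - 1) + 1 = j from by omega]
          rw [if_pos hj]
        rw [e2, Finset.sum_range_one, termZ_eq Z (by omega), Nat.sub_zero]
        ring
    · have hi1 : 1 ≤ i := by omega
      rw [if_pos hi1]
      have e1 : Vf Z (i - 1) j = ∑ k ∈ Finset.Ico i n, termZ Z (i + j) k := by
        simp only [Vf, show i - 1 + j + 1 = i + j from by omega,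
          show i - 1 + 1 = i from by omega]
        rw [if_neg htop]
      have e2 : Vf Z i (j - 1) = ∑ k ∈ Finset.Ico (i + 1) n, termZ Z (i + j) k := by
        simp only [Vf, show i + (j - 1) + 1 = i + j from by omega]
        rw [if_neg htop]
      rw [e1, e2, Finset.sum_eq_sum_Ico_succ_bot (show i < n from hi),
        termZ_eq Z (by omega), show i + j - i = j from by omega]
      ring

lemma construct (Z : Matrix (Fin n) (Fin m) ℂ) :
    (NU n)ᵀ * Vmat Z - Vmat Z * NU m = Z - Dmat Z := by
  ext i j
  have hi := i.isLt; have hj := j.isLt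
  rw [T_entry]
  have h1 : (if 1 ≤ (i : ℕ) then extZ (Vmat Z) ((i : ℕ) - 1) (j : ℕ) else 0)
      = (if 1 ≤ (i : ℕ) then Vf Z ((i : ℕ) - 1) (j : ℕ) else 0) := by
    split_ifs with h
    · rw [extZ_eq _ (by omega) (by omega)]; rfl
    · rfl
  have h2 : (if 1 ≤ (j : ℕ) then extZ (Vmat Z) (i : ℕ) ((j : ℕ) - 1) else 0)
      = (if 1 ≤ (j : ℕ) then Vf Z (i : ℕ) ((j : ℕ) - 1) else 0) := by
    split_ifs with h
    · rw [extZ_eq _ (by omega) (by omega)]; rfl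
    · rfl
  rw [h1, h2, core Z hi hj, Matrix.sub_apply]
  congr 1
  exact extZ_apply Z i j

/-- The decomposition used for surjectivity and uniqueness. -/
lemma exists_decomp (lam : ℂ) (X Y : Matrix (Fin n) (Fin m) ℂ) :
    ∃ D : Matrix (Fin n) (Fin m) ℂ,
      ((0, D) : Matrix (Fin n) (Fin m) ℂ × Matrix (Fin n) (Fin m) ℂ) ∈
        entryPattern (∅ : Set (Fin n × Fin m))
          {pq : Fin n × Fin m | (pq.2 : ℕ) = 0 ∧ (pq.1 : ℕ) + 1 ≤ min n m} ∧
      (X, Y - D) ∈ WSpace (delM n) (lamM n lam) (delM m) (lamM m lam) := by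
  set Z : Matrix (Fin n) (Fin m) ℂ := Y - lam • X - X * NU m with hZ
  refine ⟨Dmat Z, ?_, ?_⟩
  · rw [mem_entryPattern_iff]
    refine ⟨fun i j _ => rfl, fun i j hns => ?_⟩
    simp only [Dmat, Matrix.of_apply]
    rw [if_neg (by simpa only [Set.mem_setOf_eq] using hns)]
  · rw [mem_W_iff]
    refine ⟨Vmat Z, ?_⟩
    rw [construct, hZ]
    abel

lemma finrank_P (hm : 0 < m) :
    Module.finrank ℂ ↥(entryPattern (∅ : Set (Fin n × Fin m))
      {pq : Fin n × Fin m | (pq.2 : ℕ) = 0 ∧ (pq.1 : ℕ) + 1 ≤ min n m}) = min n m := by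
  have hminn : ∀ k : Fin (min n m), (k : ℕ) < n := fun k =>
    lt_of_lt_of_le k.isLt (min_le_left n m)
  let E : ↥(entryPattern (∅ : Set (Fin n × Fin m))
      {pq : Fin n × Fin m | (pq.2 : ℕ) = 0 ∧ (pq.1 : ℕ) + 1 ≤ min n m}) ≃ₗ[ℂ]
      (Fin (min n m) → ℂ) :=
    { toFun := fun d k => d.val.2 ⟨(k : ℕ), hminn k⟩ ⟨0, hm⟩
      map_add' := fun a b => rfl
      map_smul' := fun c a => rfl
      invFun := fun c =>
        ⟨(0, Matrix.of fun i j =>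
            if h : (j : ℕ) = 0 ∧ (i : ℕ) < min n m then c ⟨(i : ℕ), h.2⟩ else 0),
          mem_entryPattern_iff.mpr
            ⟨fun i j _ => rfl, fun i j hns => by
              simp only [Matrix.of_apply]
              rw [dif_neg]
              exact fun hcon => hns ⟨hcon.1, hcon.2⟩⟩⟩
      left_inv := by
        rintro ⟨⟨A, B⟩, hAB⟩
        obtain ⟨h1, h2⟩ := mem_entryPattern_iff.mp hAB
        apply Subtype.ext
        apply Prod.ext
        · exact (by ext i j; exact (h1 i j (Set.notMem_empty _)).symm :
            (0 : Matrix (Fin n) (Fin m) ℂ) = A)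
        · ext i j
          simp only [Matrix.of_apply]
          by_cases h : (j : ℕ) = 0 ∧ (i : ℕ) < min n m
          · have hj : j = ⟨0, hm⟩ := Fin.ext h.1
            subst hj
            rw [dif_pos h]
          · rw [dif_neg h]
            exact (h2 i j (fun hcon => h ⟨hcon.1, hcon.2⟩)).symm
      right_inv := by
        intro c
        funext k
        simp only [Matrix.of_apply]
        split_ifs with h
        · rfl
        · exfalso
          apply h
          exact ⟨by trivial, k.isLt⟩ }
  rw [LinearEquiv.finrank_eq E, Module.finrank_fin_fun]

end HHAux

/-- **Off-diagonal blocks `H_n(λ)` vs `H_m(λ)`.** With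
`W = {(Rᵀ Δ_m + Δ_n S, Rᵀ Λ_m(λ) + Λ_n(λ) S)}` and `P` the pairs `(0, Y)` with `Y`
supported on the first column, rows `1, …, min(n,m)`, one has
`ℂ^{n×m} × ℂ^{n×m} = W ⊕ P`; in particular every coset of `W` contains exactly one
element of `P`, and `W` has codimension `min(n,m)`. -/
theorem H_H_offdiagonal_equal_eigenvalues (n m : ℕ) (hn : 0 < n) (hm : 0 < m) (lam : ℂ) :
    Disjoint (WSpace (delM n) (lamM n lam) (delM m) (lamM m lam))
      (entryPattern (∅ : Set (Fin n × Fin m))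
        {pq : Fin n × Fin m | (pq.2 : ℕ) = 0 ∧ (pq.1 : ℕ) + 1 ≤ min n m}) ∧
    WSpace (delM n) (lamM n lam) (delM m) (lamM m lam) ⊔
      entryPattern (∅ : Set (Fin n × Fin m))
        {pq : Fin n × Fin m | (pq.2 : ℕ) = 0 ∧ (pq.1 : ℕ) + 1 ≤ min n m} = ⊤ ∧
    (∀ v : Matrix (Fin n) (Fin m) ℂ × Matrix (Fin n) (Fin m) ℂ, ∃! d,
      d ∈ entryPattern (∅ : Set (Fin n × Fin m))
        {pq : Fin n × Fin m | (pq.2 : ℕ) = 0 ∧ (pq.1 : ℕ) + 1 ≤ min n m} ∧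
      v - d ∈ WSpace (delM n) (lamM n lam) (delM m) (lamM m lam)) ∧
    Module.finrank ℂ
      ((Matrix (Fin n) (Fin m) ℂ × Matrix (Fin n) (Fin m) ℂ) ⧸
        WSpace (delM n) (lamM n lam) (delM m) (lamM m lam)) = min n m := by
  have hdis := HHAux.W_disjoint_P (n := n) (m := m) lam
  have hsub : ∀ (v : Matrix (Fin n) (Fin m) ℂ × Matrix (Fin n) (Fin m) ℂ)
      (D : Matrix (Fin n) (Fin m) ℂ),
      v - ((0 : Matrix (Fin n) (Fin m) ℂ), D) = (v.1, v.2 - D) := by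
    intro v D
    apply Prod.ext
    · show v.1 - 0 = v.1
      rw [sub_zero]
    · rfl
  have hsup : WSpace (delM n) (lamM n lam) (delM m) (lamM m lam) ⊔
      entryPattern (∅ : Set (Fin n × Fin m))
        {pq : Fin n × Fin m | (pq.2 : ℕ) = 0 ∧ (pq.1 : ℕ) + 1 ≤ min n m} = ⊤ := by
    rw [eq_top_iff]
    rintro v -
    obtain ⟨D, hDP, hWD⟩ := HHAux.exists_decomp lam v.1 v.2
    have hv : v = (v.1, v.2 - D) + ((0 : Matrix (Fin n) (Fin m) ℂ), D) := by
      apply Prod.ext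
      · show v.1 = v.1 + 0
        rw [add_zero]
      · show v.2 = v.2 - D + D
        abel
    rw [hv]
    exact Submodule.add_mem_sup hWD hDP
  refine ⟨hdis, hsup, ?_, ?_⟩
  · intro v
    obtain ⟨D, hDP, hWD⟩ := HHAux.exists_decomp lam v.1 v.2
    refine ⟨((0 : Matrix (Fin n) (Fin m) ℂ), D), ⟨hDP, ?_⟩, ?_⟩
    · rw [hsub]
      exact hWD
    · rintro d' ⟨hd'P, hd'W⟩
      have h1 : d' - ((0 : Matrix (Fin n) (Fin m) ℂ), D) ∈
          entryPattern (∅ : Set (Fin n × Fin m))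
            {pq : Fin n × Fin m | (pq.2 : ℕ) = 0 ∧ (pq.1 : ℕ) + 1 ≤ min n m} :=
        Submodule.sub_mem _ hd'P hDP
      have h2 : d' - ((0 : Matrix (Fin n) (Fin m) ℂ), D) ∈
          WSpace (delM n) (lamM n lam) (delM m) (lamM m lam) := by
        have heq : d' - ((0 : Matrix (Fin n) (Fin m) ℂ), D)
            = (v - ((0 : Matrix (Fin n) (Fin m) ℂ), D)) - (v - d') := by abel
        rw [heq, hsub]
        exact Submodule.sub_mem _ hWD hd'W
      have h0 := Submodule.disjoint_def.mp hdis _ h2 h1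
      rwa [sub_eq_zero] at h0
  · have hcompl : IsCompl (WSpace (delM n) (lamM n lam) (delM m) (lamM m lam))
        (entryPattern (∅ : Set (Fin n × Fin m))
          {pq : Fin n × Fin m | (pq.2 : ℕ) = 0 ∧ (pq.1 : ℕ) + 1 ≤ min n m}) :=
      ⟨hdis, codisjoint_iff.mpr hsup⟩
    rw [LinearEquiv.finrank_eq (Submodule.quotientEquivOfIsCompl _ _ hcompl)]
    exact HHAux.finrank_P hm


end
end

section
/- Let n, m be positive integers. Let W := { (R^T Λ_m(0) + Λ_n(0) S, R^T Δ_m + Δ_n S) : S ∈ ℂ^{n×m}, R ∈ ℂ^{m×n} } ⊆ ℂ^{n×m} × ℂ^{n×m}, and let P := { (X, 0) : X ∈ ℂ^{n×m}, X_{ij} = 0 unless j = 1 and i ≤ min(n,m) }. Then ℂ^{n×m} × ℂ^{n×m} = W ⊕ P. -/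
open Matrix

noncomputable section

namespace KKAux

variable {n m : ℕ}

/-- The ℕ-indexed extension of a matrix by zero. -/
def ext (M : Matrix (Fin n) (Fin m) ℂ) (a b : ℕ) : ℂ :=
  if h : a < n ∧ b < m then M ⟨a, h.1⟩ ⟨b, h.2⟩ else 0

lemma ext_lt {M : Matrix (Fin n) (Fin m) ℂ} {a b : ℕ} (ha : a < n) (hb : b < m) :
    ext M a b = M ⟨a, ha⟩ ⟨b, hb⟩ := dif_pos ⟨ha, hb⟩

lemma ext_apply (M : Matrix (Fin n) (Fin m) ℂ) (i : Fin n) (j : Fin m) :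
    ext M (i : ℕ) (j : ℕ) = M i j := by
  rw [ext_lt i.isLt j.isLt]

lemma ext_ge₁ {M : Matrix (Fin n) (Fin m) ℂ} {a b : ℕ} (ha : n ≤ a) : ext M a b = 0 := by
  rw [ext, dif_neg]; omega

lemma ext_ge₂ {M : Matrix (Fin n) (Fin m) ℂ} {a b : ℕ} (hb : m ≤ b) : ext M a b = 0 := by
  rw [ext, dif_neg]; omega

lemma sum_ite_coe (N : ℕ) (f : Fin N → ℂ) (c : ℕ) :
    (∑ k : Fin N, if (k : ℕ) = c then f k else 0)
      = if h : c < N then f ⟨c, h⟩ else 0 := by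
  split_ifs with h
  · have he : ∀ k : Fin N, ((k : ℕ) = c) = (k = ⟨c, h⟩) := fun k => by
      apply propext; constructor
      · intro hk; exact Fin.ext hk
      · intro hk; subst hk; rfl
    simp only [he]
    simp
  · refine Finset.sum_eq_zero fun k _ => if_neg fun hk => ?_
    exact h (hk ▸ k.isLt)

lemma offMap_fst (S : Matrix (Fin n) (Fin m) ℂ) (R : Matrix (Fin m) (Fin n) ℂ)
    (i : Fin n) (j : Fin m) :
    (offMap (lamM n 0) (delM n) (lamM m 0) (delM m) (S, R)).1 i j
      = ext R (m - (j : ℕ)) (i : ℕ) + ext S (n - (i : ℕ)) (j : ℕ) := by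
  have hi := i.isLt; have hj := j.isLt
  show (Rᵀ * lamM m 0 + lamM n 0 * S) i j = _
  rw [Matrix.add_apply, Matrix.mul_apply, Matrix.mul_apply]
  have h1 : ∀ k : Fin m, Rᵀ i k * lamM m 0 k j
      = if (k : ℕ) = m - (j : ℕ) then R k i else 0 := by
    intro k
    have hk := k.isLt
    simp only [Matrix.transpose_apply, lamM, Matrix.of_apply]
    split_ifs <;> first | ring1 | (exfalso; omega)
  have h2 : ∀ k : Fin n, lamM n 0 i k * S k j
      = if (k : ℕ) = n - (i : ℕ) then S k j else 0 := by
    intro k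
    have hk := k.isLt
    simp only [lamM, Matrix.of_apply]
    split_ifs <;> first | ring1 | (exfalso; omega)
  rw [Finset.sum_congr rfl fun k _ => h1 k, Finset.sum_congr rfl fun k _ => h2 k,
    sum_ite_coe, sum_ite_coe]
  congr 1
  · rw [ext]
    rcases lt_or_ge (m - (j : ℕ)) m with h | h
    · rw [dif_pos h, dif_pos ⟨h, hi⟩]
    · rw [dif_neg (by omega), dif_neg (by omega)]
  · rw [ext]
    rcases lt_or_ge (n - (i : ℕ)) n with h | h
    · rw [dif_pos h, dif_pos ⟨h, hj⟩]
    · rw [dif_neg (by omega), dif_neg (by omega)]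

lemma offMap_snd (S : Matrix (Fin n) (Fin m) ℂ) (R : Matrix (Fin m) (Fin n) ℂ)
    (i : Fin n) (j : Fin m) :
    (offMap (lamM n 0) (delM n) (lamM m 0) (delM m) (S, R)).2 i j
      = ext R (m - 1 - (j : ℕ)) (i : ℕ) + ext S (n - 1 - (i : ℕ)) (j : ℕ) := by
  have hi := i.isLt; have hj := j.isLt
  show (Rᵀ * delM m + delM n * S) i j = _
  rw [Matrix.add_apply, Matrix.mul_apply, Matrix.mul_apply]
  have h1 : ∀ k : Fin m, Rᵀ i k * delM m k j
      = if (k : ℕ) = m - 1 - (j : ℕ) then R k i else 0 := by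
    intro k
    have hk := k.isLt
    simp only [Matrix.transpose_apply, delM, Matrix.of_apply]
    split_ifs <;> first | ring1 | (exfalso; omega)
  have h2 : ∀ k : Fin n, delM n i k * S k j
      = if (k : ℕ) = n - 1 - (i : ℕ) then S k j else 0 := by
    intro k
    have hk := k.isLt
    simp only [delM, Matrix.of_apply]
    split_ifs <;> first | ring1 | (exfalso; omega)
  rw [Finset.sum_congr rfl fun k _ => h1 k, Finset.sum_congr rfl fun k _ => h2 k,
    sum_ite_coe, sum_ite_coe]
  congr 1
  · rw [ext, dif_pos (show m - 1 - (j : ℕ) < m by omega),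
      dif_pos (⟨by omega, hi⟩ : m - 1 - (j : ℕ) < m ∧ (i : ℕ) < n)]
  · rw [ext, dif_pos (show n - 1 - (i : ℕ) < n by omega),
      dif_pos (⟨by omega, hj⟩ : n - 1 - (i : ℕ) < n ∧ (j : ℕ) < m)]

/-- The right-hand side `Z'(a,j) = X(n-1-a, j) - [j ≥ 1]·Y(n-1-a, j-1)`, extended by `0`. -/
def Zf (X Y : Matrix (Fin n) (Fin m) ℂ) (a j : ℕ) : ℂ :=
  if h : a < n ∧ j < m then
    X ⟨n - 1 - a, by omega⟩ ⟨j, h.2⟩ -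
      (if hj : 1 ≤ j then Y ⟨n - 1 - a, by omega⟩ ⟨j - 1, by omega⟩ else 0)
  else 0

lemma Zf_lt (X Y : Matrix (Fin n) (Fin m) ℂ) {a j : ℕ} (ha : a < n) (hj : j < m) :
    Zf X Y a j = ext X (n - 1 - a) j - (if 1 ≤ j then ext Y (n - 1 - a) (j - 1) else 0) := by
  rw [Zf, dif_pos ⟨ha, hj⟩, ext_lt (by omega) hj]
  congr 1
  split_ifs with h
  · rw [ext_lt (by omega) (by omega)]
  · rfl

lemma Zf_ge₁ (X Y : Matrix (Fin n) (Fin m) ℂ) {a j : ℕ} (ha : n ≤ a) : Zf X Y a j = 0 := by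
  rw [Zf, dif_neg]; omega

/-- The diagonal sum `σ(a) = ∑_t Z'(a+t, t)`. -/
def sig (X Y : Matrix (Fin n) (Fin m) ℂ) (a : ℕ) : ℂ :=
  ∑ t ∈ Finset.range n, Zf X Y (a + t) t

/-- The explicit solution `S` of the Sylvester-type recurrence. -/
def Sf (X Y : Matrix (Fin n) (Fin m) ℂ) (a b : ℕ) : ℂ :=
  if 1 ≤ a - b ∧ a - b ≤ n - m then ∑ t ∈ Finset.range (b + 1), Zf X Y (a - 1 - t) (b - t)
  else -∑ t ∈ Finset.range n, Zf X Y (a + t) (b + 1 + t)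

lemma sum_shift (f : ℕ → ℂ) (hf : f n = 0) :
    ∑ t ∈ Finset.range n, f (t + 1) = (∑ t ∈ Finset.range n, f t) - f 0 := by
  have h1 := Finset.sum_range_succ' f n
  have h2 := Finset.sum_range_succ f n
  linear_combination h2 - h1 + hf

/-- The key recurrence satisfied by `Sf`. -/
lemma keyE (X Y : Matrix (Fin n) (Fin m) ℂ) {a j : ℕ} (ha : a < n) (hj : j < m) :
    (if a + 1 < n then Sf X Y (a + 1) j else 0) - (if 1 ≤ j then Sf X Y a (j - 1) else 0)
      = Zf X Y a j - (if j = 0 ∧ n - m ≤ a then sig X Y a else 0) := by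
  by_cases hF : j ≤ a ∧ a + 1 - j ≤ n - m
  · have hn1 : a + 1 < n := by omega
    rw [if_pos hn1, if_neg (show ¬(j = 0 ∧ n - m ≤ a) by omega), Sf,
      if_pos (show 1 ≤ a + 1 - j ∧ a + 1 - j ≤ n - m by omega)]
    by_cases hj1 : 1 ≤ j
    · rw [if_pos hj1, Sf, if_pos (show 1 ≤ a - (j - 1) ∧ a - (j - 1) ≤ n - m by omega)]
      rw [show j - 1 + 1 = j from by omega,
        Finset.sum_range_succ' (fun t => Zf X Y (a + 1 - 1 - t) (j - t)) j]
      have he : ∀ t ∈ Finset.range j,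
          Zf X Y (a + 1 - 1 - (t + 1)) (j - (t + 1)) = Zf X Y (a - 1 - t) (j - 1 - t) :=
        fun t _ => by
          rw [show a + 1 - 1 - (t + 1) = a - 1 - t from by omega,
            show j - (t + 1) = j - 1 - t from by omega]
      rw [Finset.sum_congr rfl he, show a + 1 - 1 - 0 = a from by omega, Nat.sub_zero]
      ring
    · rw [if_neg hj1]
      have hj0 : j = 0 := by omega
      subst hj0
      rw [Finset.sum_range_one, show a + 1 - 1 - 0 = a from by omega]
  · have hS1 : (if a + 1 < n then Sf X Y (a + 1) j else 0)
        = if a + 1 < n then -∑ t ∈ Finset.range n, Zf X Y (a + 1 + t) (j + 1 + t) else 0 := by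
      rcases Nat.lt_or_ge (a + 1) n with h | h
      · rw [if_pos h, if_pos h, Sf, if_neg (by omega)]
      · rw [if_neg (by omega), if_neg (by omega)]
    rw [hS1]
    by_cases hj1 : 1 ≤ j
    · have hS2 : Sf X Y a (j - 1) = -∑ t ∈ Finset.range n, Zf X Y (a + t) (j + t) := by
        rw [Sf, if_neg (by omega)]
        congr 1
        refine Finset.sum_congr rfl fun t _ => ?_
        rw [show j - 1 + 1 + t = j + t from by omega]
      rw [if_pos hj1, hS2, if_neg (show ¬(j = 0 ∧ n - m ≤ a) by omega)]
      by_cases hlast : a + 1 < n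
      · rw [if_pos hlast]
        have hsh := sum_shift (fun t => Zf X Y (a + t) (j + t)) (Zf_ge₁ X Y (a := a + n) (j := j + n) (by omega))
        have he : ∀ t ∈ Finset.range n,
            Zf X Y (a + 1 + t) (j + 1 + t) = Zf X Y (a + (t + 1)) (j + (t + 1)) :=
          fun t _ => by
            rw [show a + (t + 1) = a + 1 + t from by omega,
              show j + (t + 1) = j + 1 + t from by omega]
        rw [Finset.sum_congr rfl he, hsh]
        simp only [Nat.add_zero]
        ring
      · rw [if_neg hlast]
        have hsum : ∑ t ∈ Finset.range n, Zf X Y (a + t) (j + t) = Zf X Y a j := by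
          rw [Finset.sum_eq_single 0]
          · rw [Nat.add_zero, Nat.add_zero]
          · intro t _ ht0; exact Zf_ge₁ X Y (by omega)
          · intro h0; exact absurd (Finset.mem_range.2 (by omega)) h0
        rw [hsum]; ring
    · have hj0 : j = 0 := by omega
      subst hj0
      rw [if_neg hj1, if_pos (show (0 : ℕ) = 0 ∧ n - m ≤ a by omega)]
      by_cases hlast : a + 1 < n
      · rw [if_pos hlast]
        have hsh := sum_shift (fun t => Zf X Y (a + t) t) (Zf_ge₁ X Y (a := a + n) (j := n) (by omega))
        have he : ∀ t ∈ Finset.range n,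
            Zf X Y (a + 1 + t) (0 + 1 + t) = Zf X Y (a + (t + 1)) (t + 1) :=
          fun t _ => by
            rw [show a + (t + 1) = a + 1 + t from by omega,
              show (0 + 1 + t : ℕ) = t + 1 from by omega]
        rw [Finset.sum_congr rfl he, hsh]
        show -((∑ t ∈ Finset.range n, Zf X Y (a + t) t) - Zf X Y (a + 0) 0) - 0
          = Zf X Y a 0 - sig X Y a
        rw [sig, Nat.add_zero]
        ring
      · rw [if_neg hlast]
        have hsig : sig X Y a = Zf X Y a 0 := by
          rw [sig, Finset.sum_eq_single 0]
          · rw [Nat.add_zero]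
          · intro t _ ht0; exact Zf_ge₁ X Y (by omega)
          · intro h0; exact absurd (Finset.mem_range.2 (by omega)) h0
        rw [hsig]; ring

/-- The matrix `S` used in the surjectivity argument. -/
def Smat (X Y : Matrix (Fin n) (Fin m) ℂ) : Matrix (Fin n) (Fin m) ℂ :=
  Matrix.of fun a b => Sf X Y (a : ℕ) (b : ℕ)

/-- The matrix `R` used in the surjectivity argument. -/
def Rmat (X Y : Matrix (Fin n) (Fin m) ℂ) : Matrix (Fin m) (Fin n) ℂ :=
  Matrix.of fun a b => ext Y (b : ℕ) (m - 1 - (a : ℕ)) - Sf X Y (n - 1 - (b : ℕ)) (m - 1 - (a : ℕ))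

lemma ext_Smat (X Y : Matrix (Fin n) (Fin m) ℂ) {a b : ℕ} (ha : a < n) (hb : b < m) :
    ext (Smat X Y) a b = Sf X Y a b := by
  rw [ext_lt ha hb]; rfl

lemma ext_Rmat (X Y : Matrix (Fin n) (Fin m) ℂ) {a b : ℕ} (ha : a < m) (hb : b < n) :
    ext (Rmat X Y) a b = ext Y b (m - 1 - a) - Sf X Y (n - 1 - b) (m - 1 - a) := by
  rw [ext_lt ha hb]; rfl

lemma w_fst (X Y : Matrix (Fin n) (Fin m) ℂ) (i : Fin n) (j : Fin m) :
    (offMap (lamM n 0) (delM n) (lamM m 0) (delM m) (Smat X Y, Rmat X Y)).1 i j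
      = (if 1 ≤ (j : ℕ) then
            ext Y (i : ℕ) ((j : ℕ) - 1) - Sf X Y (n - 1 - (i : ℕ)) ((j : ℕ) - 1) else 0)
        + (if n - 1 - (i : ℕ) + 1 < n then Sf X Y (n - 1 - (i : ℕ) + 1) (j : ℕ) else 0) := by
  have hi := i.isLt; have hj := j.isLt
  rw [offMap_fst]
  congr 1
  · by_cases hj1 : 1 ≤ (j : ℕ)
    · rw [if_pos hj1, ext_Rmat X Y (by omega) i.isLt,
        show m - 1 - (m - (j : ℕ)) = (j : ℕ) - 1 from by omega]
    · rw [if_neg hj1, show m - (j : ℕ) = m from by omega, ext_ge₁ (le_refl m)]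
  · by_cases hi1 : 1 ≤ (i : ℕ)
    · rw [if_pos (show n - 1 - (i : ℕ) + 1 < n from by omega),
        ext_Smat X Y (by omega) j.isLt,
        show n - (i : ℕ) = n - 1 - (i : ℕ) + 1 from by omega]
    · rw [if_neg (show ¬(n - 1 - (i : ℕ) + 1 < n) from by omega),
        show n - (i : ℕ) = n from by omega, ext_ge₁ (le_refl n)]

lemma w_snd (X Y : Matrix (Fin n) (Fin m) ℂ) (i : Fin n) (j : Fin m) :
    (offMap (lamM n 0) (delM n) (lamM m 0) (delM m) (Smat X Y, Rmat X Y)).2 i j = Y i j := by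
  have hi := i.isLt; have hj := j.isLt
  rw [offMap_snd, ext_Rmat X Y (by omega) i.isLt, ext_Smat X Y (by omega) j.isLt,
    show m - 1 - (m - 1 - (j : ℕ)) = (j : ℕ) from by omega, ext_apply]
  ring

lemma p1 (X Y : Matrix (Fin n) (Fin m) ℂ) (i : Fin n) (j : Fin m) :
    X i j - (offMap (lamM n 0) (delM n) (lamM m 0) (delM m) (Smat X Y, Rmat X Y)).1 i j
      = if ((j : ℕ) = 0 ∧ n - m ≤ n - 1 - (i : ℕ)) then sig X Y (n - 1 - (i : ℕ)) else 0 := by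
  have hi := i.isLt; have hj := j.isLt
  rw [w_fst]
  have hE := keyE X Y (a := n - 1 - (i : ℕ)) (j := (j : ℕ)) (by omega) hj
  rw [Zf_lt X Y (by omega) hj, show n - 1 - (n - 1 - (i : ℕ)) = (i : ℕ) from by omega,
    ext_apply] at hE
  split_ifs at hE ⊢ <;>
    first | linear_combination hE | linear_combination -hE | (exfalso; omega)

lemma mem_entryPattern {ι κ : Type} {S1 S2 : Set (ι × κ)}
    {x : Matrix ι κ ℂ × Matrix ι κ ℂ} :
    x ∈ entryPattern S1 S2 ↔
      (∀ i j, (i, j) ∉ S1 → x.1 i j = 0) ∧ (∀ i j, (i, j) ∉ S2 → x.2 i j = 0) :=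
  Iff.rfl

end KKAux

/-- **Off-diagonal blocks `K_n` vs `K_m`.** With
`W = {(Rᵀ Λ_m(0) + Λ_n(0) S, Rᵀ Δ_m + Δ_n S)}` and `P` the pairs `(X, 0)` with `X`
supported on the first column, rows `1, …, min(n,m)`, one has
`ℂ^{n×m} × ℂ^{n×m} = W ⊕ P`. -/
theorem K_K_offdiagonal (n m : ℕ) (hn : 0 < n) (hm : 0 < m) :
    Disjoint (WSpace (lamM n 0) (delM n) (lamM m 0) (delM m))
      (entryPattern
        {pq : Fin n × Fin m | (pq.2 : ℕ) = 0 ∧ (pq.1 : ℕ) + 1 ≤ min n m}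
        (∅ : Set (Fin n × Fin m))) ∧
    WSpace (lamM n 0) (delM n) (lamM m 0) (delM m) ⊔
      entryPattern
        {pq : Fin n × Fin m | (pq.2 : ℕ) = 0 ∧ (pq.1 : ℕ) + 1 ≤ min n m}
        (∅ : Set (Fin n × Fin m)) = ⊤ := by
  constructor
  · -- disjointness
    rw [Submodule.disjoint_def]
    rintro ⟨x1, x2⟩ hW hP
    obtain ⟨⟨S, R⟩, hSR⟩ := hW
    rw [KKAux.mem_entryPattern] at hP
    obtain ⟨hP1, hP2⟩ := hP
    have hfst : (offMap (lamM n 0) (delM n) (lamM m 0) (delM m) (S, R)).1 = x1 :=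
      congrArg Prod.fst hSR
    have hsnd : (offMap (lamM n 0) (delM n) (lamM m 0) (delM m) (S, R)).2 = x2 :=
      congrArg Prod.snd hSR
    have hx2 : ∀ (i : Fin n) (j : Fin m), x2 i j = 0 := fun i j =>
      hP2 i j (Set.notMem_empty _)
    have h2 : ∀ (i : Fin n) (j : Fin m),
        KKAux.ext R (m - 1 - (j : ℕ)) (i : ℕ) + KKAux.ext S (n - 1 - (i : ℕ)) (j : ℕ) = 0 := by
      intro i j
      rw [← KKAux.offMap_snd S R i j, hsnd]
      exact hx2 i j
    refine Prod.ext ?_ ?_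
    · show x1 = 0
      ext i j
      have hi := i.isLt; have hj := j.isLt
      show x1 i j = 0
      by_cases hp : (j : ℕ) = 0 ∧ (i : ℕ) + 1 ≤ min n m
      · obtain ⟨hj0, hmin⟩ := hp
        set F : ℕ → ℂ := fun t =>
          if 1 ≤ t ∧ t ≤ (i : ℕ) then KKAux.ext S (n - 1 - (i : ℕ) + t) (t - 1) else 0
          with hFdef
        have key : ∀ t (ht : t ≤ (i : ℕ)),
            x1 ⟨(i : ℕ) - t, by omega⟩ ⟨t, by omega⟩ = F (t + 1) - F t := by
          intro t ht
          rw [← hfst, KKAux.offMap_fst]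
          have e2 : KKAux.ext S (n - ((i : ℕ) - t)) t = F (t + 1) := by
            by_cases h : t + 1 ≤ (i : ℕ)
            · simp only [hFdef]
              rw [if_pos (⟨by omega, h⟩ : 1 ≤ t + 1 ∧ t + 1 ≤ (i : ℕ)),
                show n - 1 - (i : ℕ) + (t + 1) = n - ((i : ℕ) - t) from by omega,
                show t + 1 - 1 = t from by omega]
            · rw [show n - ((i : ℕ) - t) = n from by omega, KKAux.ext_ge₁ (le_refl n)]
              simp only [hFdef]
              rw [if_neg (by omega)]
          have e1 : KKAux.ext R (m - t) ((i : ℕ) - t) = -F t := by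
            by_cases h : 1 ≤ t
            · have h2t := h2 ⟨(i : ℕ) - t, by omega⟩ ⟨t - 1, by omega⟩
              simp only [Fin.val_mk] at h2t
              rw [show m - 1 - (t - 1) = m - t from by omega,
                show n - 1 - ((i : ℕ) - t) = n - 1 - (i : ℕ) + t from by omega] at h2t
              simp only [hFdef]
              rw [if_pos (⟨h, ht⟩ : 1 ≤ t ∧ t ≤ (i : ℕ))]
              linear_combination h2t
            · have ht0 : t = 0 := by omega
              subst ht0
              rw [Nat.sub_zero, KKAux.ext_ge₁ (le_refl m)]
              simp only [hFdef]
              rw [if_neg (by omega)]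
              ring
          simp only [Fin.val_mk]
          rw [e1, e2]
          ring
        have hF0 : F 0 = 0 := by simp only [hFdef]; rw [if_neg (by omega)]
        have hFtop : ∀ t, (i : ℕ) < t → F t = 0 := by
          intro t ht; simp only [hFdef]; rw [if_neg (by omega)]
        have hFall : ∀ d t, t + d = (i : ℕ) + 1 → F t = 0 := by
          intro d
          induction d with
          | zero => intro t ht; exact hFtop t (by omega)
          | succ d ih =>
            intro t ht
            by_cases ht1 : 1 ≤ t
            · have hx0 : x1 ⟨(i : ℕ) - t, by omega⟩ ⟨t, by omega⟩ = 0 := by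
                refine hP1 _ _ fun hc => ?_
                have : (t : ℕ) = 0 := hc.1
                omega
              have hk := key t (by omega)
              rw [hx0] at hk
              have := ih (t + 1) (by omega)
              linear_combination hk + this
            · have ht0 : t = 0 := by omega
              subst ht0; exact hF0
        have hx10 : x1 ⟨(i : ℕ) - 0, by omega⟩ ⟨0, by omega⟩ = 0 := by
          rw [key 0 (by omega), hF0, hFall (i : ℕ) (0 + 1) (by omega)]
          ring
        have hii : (⟨(i : ℕ) - 0, by omega⟩ : Fin n) = i := Fin.ext rfl
        have hji : (⟨0, by omega⟩ : Fin m) = j := Fin.ext hj0.symm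
        rwa [hii, hji] at hx10
      · refine hP1 i j fun hc => ?_
        exact hp ⟨hc.1, hc.2⟩
    · show x2 = 0
      ext i j
      exact hx2 i j
  · -- sum is everything
    rw [eq_top_iff]
    rintro ⟨X, Y⟩ -
    refine Submodule.mem_sup.2
      ⟨offMap (lamM n 0) (delM n) (lamM m 0) (delM m) (KKAux.Smat X Y, KKAux.Rmat X Y),
        ⟨(KKAux.Smat X Y, KKAux.Rmat X Y), rfl⟩,
        (X, Y) - offMap (lamM n 0) (delM n) (lamM m 0) (delM m)
          (KKAux.Smat X Y, KKAux.Rmat X Y), ?_, by abel⟩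
    rw [KKAux.mem_entryPattern]
    constructor
    · intro i j hns
      have hi := i.isLt; have hj := j.isLt
      show X i j - (offMap (lamM n 0) (delM n) (lamM m 0) (delM m)
        (KKAux.Smat X Y, KKAux.Rmat X Y)).1 i j = 0
      rw [KKAux.p1, if_neg]
      rintro ⟨hj0, hle⟩
      exact hns ⟨hj0, show (i : ℕ) + 1 ≤ min n m by omega⟩
    · intro i j _
      show Y i j - (offMap (lamM n 0) (delM n) (lamM m 0) (delM m)
        (KKAux.Smat X Y, KKAux.Rmat X Y)).2 i j = 0
      rw [KKAux.w_snd]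
      ring

end
end

section
/- Let n, m be positive integers. Let W := { (R^T L_m^{(1)} + L_n^{(1)} S, R^T L_m^{(2)} + L_n^{(2)} S) : S ∈ ℂ^{(2n+1)×(2m+1)}, R ∈ ℂ^{(2m+1)×(2n+1)} } ⊆ ℂ^{(2n+1)×(2m+1)} × ℂ^{(2n+1)×(2m+1)}, and let P be the subspace of pairs (X, Y) of (2n+1)×(2m+1) complex matrices such that X_{ij} = 0 unless (i,j) = (n+1, m+1), and Y_{ij} = 0 unless (i,j) lies in {(1,q) : 1 ≤ q ≤ m+1} ∪ {(p, m+1) : 1 ≤ p ≤ n+1} ∪ {(n+1, m+1+q) : n+1 ≤ q ≤ m−1} ∪ {(n+1+p, m+1) : m+1 ≤ p ≤ n−1} (the third set being empty unless n+1 < m and the fourth empty unless m+1 < n). Then ℂ^{(2n+1)×(2m+1)} × ℂ^{(2n+1)×(2m+1)} = W ⊕ P. -/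
open Matrix

noncomputable section


noncomputable section
theorem L1M_apply (k : ℕ) (i j : Fin (2 * k + 1)) :
    L1M k i j = if ((i : ℕ) + (k + 1) = (j : ℕ) ∨ (j : ℕ) + (k + 1) = (i : ℕ)) then 1 else 0 := by
  obtain ⟨x, rfl⟩ := (finSumFinEquiv.trans (finCongr (by omega : (k+1) + k = 2*k+1))).surjective i
  obtain ⟨y, rfl⟩ := (finSumFinEquiv.trans (finCongr (by omega : (k+1) + k = 2*k+1))).surjective j
  rw [L1M, Matrix.reindex_apply, Matrix.submatrix_apply, Equiv.symm_apply_apply,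
    Equiv.symm_apply_apply]
  rcases x with a | a <;> rcases y with b | b <;>
    simp only [Equiv.trans_apply, finCongr_apply, Fin.coe_cast, finSumFinEquiv_apply_left,
      finSumFinEquiv_apply_right, Fin.coe_castAdd, Fin.coe_natAdd, Matrix.fromBlocks_apply₁₁,
      Matrix.fromBlocks_apply₁₂, Matrix.fromBlocks_apply₂₁, Matrix.fromBlocks_apply₂₂,
      Matrix.zero_apply, Matrix.transpose_apply, FM, Matrix.of_apply]
  · rw [if_neg]; omega
  · have hb := b.isLt
    have ha := a.isLt
    by_cases h : (a : ℕ) = (b : ℕ)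
    · rw [if_pos h, if_pos (by omega)]
    · rw [if_neg h, if_neg (by omega)]
  · have hb := b.isLt
    have ha := a.isLt
    by_cases h : (b : ℕ) = (a : ℕ)
    · rw [if_pos h, if_pos (by omega)]
    · rw [if_neg h, if_neg (by omega)]
  · rw [if_neg]; omega

theorem L2M_apply (k : ℕ) (i j : Fin (2 * k + 1)) :
    L2M k i j = if (((i : ℕ) + k = (j : ℕ) ∧ 1 ≤ (i : ℕ)) ∨ ((j : ℕ) + k = (i : ℕ) ∧ 1 ≤ (j : ℕ)))
      then 1 else 0 := by
  obtain ⟨x, rfl⟩ := (finSumFinEquiv.trans (finCongr (by omega : (k+1) + k = 2*k+1))).surjective i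
  obtain ⟨y, rfl⟩ := (finSumFinEquiv.trans (finCongr (by omega : (k+1) + k = 2*k+1))).surjective j
  rw [L2M, Matrix.reindex_apply, Matrix.submatrix_apply, Equiv.symm_apply_apply,
    Equiv.symm_apply_apply]
  rcases x with a | a <;> rcases y with b | b <;>
    simp only [Equiv.trans_apply, finCongr_apply, Fin.coe_cast, finSumFinEquiv_apply_left,
      finSumFinEquiv_apply_right, Fin.coe_castAdd, Fin.coe_natAdd, Matrix.fromBlocks_apply₁₁,
      Matrix.fromBlocks_apply₁₂, Matrix.fromBlocks_apply₂₁, Matrix.fromBlocks_apply₂₂,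
      Matrix.zero_apply, Matrix.transpose_apply, GM, Matrix.of_apply]
  · rw [if_neg]; have ha := a.isLt; have hb := b.isLt; omega
  · have hb := b.isLt
    have ha := a.isLt
    by_cases h : (a : ℕ) = (b : ℕ) + 1
    · rw [if_pos h, if_pos (by omega)]
    · rw [if_neg h, if_neg (by omega)]
  · have hb := b.isLt
    have ha := a.isLt
    by_cases h : (b : ℕ) = (a : ℕ) + 1
    · rw [if_pos h, if_pos (by omega)]
    · rw [if_neg h, if_neg (by omega)]
  · rw [if_neg]; have ha := a.isLt; have hb := b.isLt; omega

theorem mul_L1 (k : ℕ) {c : ℕ} (S : Matrix (Fin (2 * k + 1)) (Fin c) ℂ)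
    (i : Fin (2 * k + 1)) (q : Fin c) :
    (L1M k * S) i q = if h : (i : ℕ) < k then S ⟨(i : ℕ) + (k + 1), by omega⟩ q
      else if h2 : k < (i : ℕ) then S ⟨(i : ℕ) - (k + 1), by omega⟩ q else 0 := by
  rw [Matrix.mul_apply]
  by_cases h : (i : ℕ) < k
  · rw [dif_pos h]
    rw [Finset.sum_eq_single (⟨(i : ℕ) + (k + 1), by omega⟩ : Fin (2 * k + 1))]
    · rw [L1M_apply, if_pos (by left; rfl), one_mul]
    · intro u _ hu
      rw [L1M_apply, if_neg, zero_mul]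
      intro hc
      rcases hc with hc | hc
      · exact hu (Fin.ext (show (u : ℕ) = (i : ℕ) + (k + 1) by omega))
      · omega
    · intro hu; exact absurd (Finset.mem_univ _) hu
  · rw [dif_neg h]
    by_cases h2 : k < (i : ℕ)
    · have hi := i.isLt
      rw [dif_pos h2]
      rw [Finset.sum_eq_single (⟨(i : ℕ) - (k + 1), by omega⟩ : Fin (2 * k + 1))]
      · rw [L1M_apply, if_pos (by right; simp; omega), one_mul]
      · intro u _ hu
        rw [L1M_apply, if_neg, zero_mul]
        intro hc
        rcases hc with hc | hc
        · omega
        · exact hu (Fin.ext (show (u : ℕ) = (i : ℕ) - (k + 1) by omega))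
      · intro hu; exact absurd (Finset.mem_univ _) hu
    · rw [dif_neg h2]
      apply Finset.sum_eq_zero
      intro u _
      rw [L1M_apply, if_neg, zero_mul]
      have hu := u.isLt
      intro hc; rcases hc with hc | hc <;> omega

theorem mul_L2 (k : ℕ) {c : ℕ} (S : Matrix (Fin (2 * k + 1)) (Fin c) ℂ)
    (i : Fin (2 * k + 1)) (q : Fin c) :
    (L2M k * S) i q = if h : 1 ≤ (i : ℕ) ∧ (i : ℕ) ≤ k then S ⟨(i : ℕ) + k, by omega⟩ q
      else if h2 : k < (i : ℕ) then S ⟨(i : ℕ) - k, by omega⟩ q else 0 := by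
  rw [Matrix.mul_apply]
  by_cases h : 1 ≤ (i : ℕ) ∧ (i : ℕ) ≤ k
  · rw [dif_pos h]
    rw [Finset.sum_eq_single (⟨(i : ℕ) + k, by omega⟩ : Fin (2 * k + 1))]
    · rw [L2M_apply, if_pos (by left; exact ⟨rfl, h.1⟩), one_mul]
    · intro u _ hu
      rw [L2M_apply, if_neg, zero_mul]
      intro hc
      rcases hc with hc | hc
      · exact hu (Fin.ext (show (u : ℕ) = (i : ℕ) + k by omega))
      · omega
    · intro hu; exact absurd (Finset.mem_univ _) hu
  · rw [dif_neg h]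
    by_cases h2 : k < (i : ℕ)
    · have hi := i.isLt
      rw [dif_pos h2]
      rw [Finset.sum_eq_single (⟨(i : ℕ) - k, by omega⟩ : Fin (2 * k + 1))]
      · rw [L2M_apply, if_pos (Or.inr ⟨show (i:ℕ) - k + k = (i:ℕ) by omega, show 1 ≤ (i:ℕ) - k by omega⟩), one_mul]
      · intro u _ hu
        rw [L2M_apply, if_neg, zero_mul]
        intro hc
        rcases hc with hc | hc
        · omega
        · exact hu (Fin.ext (show (u : ℕ) = (i : ℕ) - k by omega))
      · intro hu; exact absurd (Finset.mem_univ _) hu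
    · rw [dif_neg h2]
      apply Finset.sum_eq_zero
      intro u _
      rw [L2M_apply, if_neg, zero_mul]
      have hu := u.isLt
      intro hc; rcases hc with hc | hc <;> omega

theorem transpose_mul_symm {a b : Type*} [Fintype a] [Fintype b]
    (R : Matrix b a ℂ) (A : Matrix b b ℂ) (hA : A.IsSymm)
    (i : a) (q : b) : (Rᵀ * A) i q = (A * R) q i := by
  rw [Matrix.mul_apply, Matrix.mul_apply]
  apply Finset.sum_congr rfl
  intro u _
  rw [Matrix.transpose_apply, mul_comm]
  congr 1
  conv_lhs => rw [← hA]
  rfl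
def sh1 (k : ℕ) (g : ℕ → ℂ) (i : ℕ) : ℂ :=
  if i < k then g (k + 1 + i) else if k < i then g (i - (k + 1)) else 0

def sh2 (k : ℕ) (g : ℕ → ℂ) (i : ℕ) : ℂ :=
  if 1 ≤ i ∧ i ≤ k then g (k + i) else if k < i then g (i - k) else 0

def Ypat (n m i q : ℕ) : Prop :=
  (i = 0 ∧ q ≤ m) ∨ (q = m ∧ i ≤ n) ∨ (i = n ∧ n + m + 2 ≤ q + 1 ∧ q + 1 ≤ 2 * m) ∨
    (q = m ∧ n + m + 2 ≤ i + 1 ∧ i + 1 ≤ 2 * n)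

theorem core_disjoint (n m : ℕ) (hn : 1 ≤ n) (hm : 1 ≤ m) (s r : ℕ → ℕ → ℂ)
    (hX : ∀ i q, i ≤ 2 * n → q ≤ 2 * m → ¬(i = n ∧ q = m) →
      sh1 m (fun v => r v i) q + sh1 n (fun u => s u q) i = 0)
    (hY : ∀ i q, i ≤ 2 * n → q ≤ 2 * m → ¬Ypat n m i q →
      sh2 m (fun v => r v i) q + sh2 n (fun u => s u q) i = 0) :
    ∀ i q, i ≤ 2 * n → q ≤ 2 * m →
      sh1 m (fun v => r v i) q + sh1 n (fun u => s u q) i = 0 ∧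
      sh2 m (fun v => r v i) q + sh2 n (fun u => s u q) i = 0 := by
  -- Chain lemma R1
  have R1 : ∀ j, 1 ≤ j → j ≤ m → ∀ k, k ≤ n → r (m + j) k = 0 := by
    intro j
    induction j using Nat.strong_induction_on with
    | _ j ih =>
      intro hj1 hjm k hk
      have h1 := hX k (j - 1) (by omega) (by omega) (by omega)
      simp only [sh1] at h1
      rw [if_pos (show j - 1 < m by omega), show m + 1 + (j - 1) = m + j by omega] at h1
      rcases Nat.lt_or_ge k n with hkn | hkn
      · rw [if_pos hkn] at h1
        have h2 := hY (k + 1) (j - 1) (by omega) (by omega)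
          (by simp only [Ypat]; omega)
        simp only [sh2] at h2
        rw [if_pos (show 1 ≤ k + 1 ∧ k + 1 ≤ n by omega),
          show n + (k + 1) = n + 1 + k by omega] at h2
        rcases Nat.eq_or_lt_of_le hj1 with hj | hj
        · rw [if_neg (show ¬(1 ≤ j - 1 ∧ j - 1 ≤ m) by omega),
            if_neg (show ¬ m < j - 1 by omega)] at h2
          rw [zero_add] at h2
          rw [h2, add_zero] at h1
          exact h1
        · rw [if_pos (show 1 ≤ j - 1 ∧ j - 1 ≤ m by omega)] at h2
          have h3 := ih (j - 1) (by omega) (by omega) (by omega) (k + 1) (by omega)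
          rw [show m + (j - 1) = m + (j-1) by rfl, h3, zero_add] at h2
          rw [h2, add_zero] at h1
          exact h1
      · rw [if_neg (show ¬ k < n by omega), if_neg (show ¬ n < k by omega), add_zero] at h1
        exact h1
  -- Chain lemma R2
  have R2 : ∀ k, k ≤ n - 1 → ∀ v, k < v → v ≤ m → r v k = 0 := by
    intro k
    induction k using Nat.strong_induction_on with
    | _ k ih =>
      intro hk v hv1 hv2
      have h2 := hY k (v + m) (by omega) (by omega) (by simp only [Ypat]; omega)
      simp only [sh2] at h2
      rw [if_neg (show ¬(1 ≤ v + m ∧ v + m ≤ m) by omega),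
        if_pos (show m < v + m by omega), show v + m - m = v by omega] at h2
      rcases Nat.eq_zero_or_pos k with hk0 | hk0
      · subst hk0
        rw [if_neg (show ¬(1 ≤ 0 ∧ 0 ≤ n) by omega), if_neg (show ¬ n < 0 by omega),
          add_zero] at h2
        exact h2
      · rw [if_pos (show 1 ≤ k ∧ k ≤ n by omega)] at h2
        have h1 := hX (k - 1) (v + m) (by omega) (by omega) (by omega)
        simp only [sh1] at h1
        rw [if_neg (show ¬ v + m < m by omega), if_pos (show m < v + m by omega),
          show v + m - (m + 1) = v - 1 by omega, if_pos (show k - 1 < n by omega),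
          show n + 1 + (k - 1) = n + k by omega] at h1
        have h3 := ih (k - 1) (by omega) (by omega) (v - 1) (by omega) (by omega)
        rw [h3, zero_add] at h1
        rw [h1, add_zero] at h2
        exact h2
  -- Chain lemma R3
  have R3 : ∀ k, 1 ≤ k → k ≤ m → ∀ i, n + 1 + k ≤ i → i ≤ 2 * n → r (m + k) i = 0 := by
    intro k
    induction k using Nat.strong_induction_on with
    | _ k ih =>
      intro hk1 hkm i hi1 hi2
      have h1 := hX i (k - 1) (by omega) (by omega) (by omega)
      simp only [sh1] at h1
      rw [if_pos (show k - 1 < m by omega), show m + 1 + (k - 1) = m + k by omega,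
        if_neg (show ¬ i < n by omega), if_pos (show n < i by omega)] at h1
      have h2 := hY (i - 1) (k - 1) (by omega) (by omega) (by simp only [Ypat]; omega)
      simp only [sh2] at h2
      rw [if_neg (show ¬(1 ≤ i - 1 ∧ i - 1 ≤ n) by omega), if_pos (show n < i - 1 by omega),
        show i - 1 - n = i - (n + 1) by omega] at h2
      rcases Nat.eq_or_lt_of_le hk1 with hk | hk
      · rw [if_neg (show ¬(1 ≤ k - 1 ∧ k - 1 ≤ m) by omega),
          if_neg (show ¬ m < k - 1 by omega), zero_add] at h2
        rw [h2, add_zero] at h1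
        exact h1
      · rw [if_pos (show 1 ≤ k - 1 ∧ k - 1 ≤ m by omega)] at h2
        have h3 := ih (k - 1) (by omega) (by omega) (by omega) (i - 1) (by omega) (by omega)
        rw [h3, zero_add] at h2
        rw [h2, add_zero] at h1
        exact h1
  -- Direct facts
  have D1 : ∀ u, 1 ≤ u → u ≤ n → s (n + u) m = 0 := by
    intro u hu1 hu2
    have h1 := hX (u - 1) m (by omega) (by omega) (by omega)
    simp only [sh1] at h1
    rw [if_neg (show ¬ m < m by omega), if_neg (show ¬ m < m by omega), zero_add,
      if_pos (show u - 1 < n by omega), show n + 1 + (u - 1) = n + u by omega] at h1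
    exact h1
  have D2 : ∀ u, u ≤ n - 1 → s u m = 0 := by
    intro u hu
    have h1 := hX (u + n + 1) m (by omega) (by omega) (by omega)
    simp only [sh1] at h1
    rw [if_neg (show ¬ m < m by omega), if_neg (show ¬ m < m by omega), zero_add,
      if_neg (show ¬ u + n + 1 < n by omega), if_pos (show n < u + n + 1 by omega),
      show u + n + 1 - (n + 1) = u by omega] at h1
    exact h1
  have D3 : ∀ v, v ≤ m - 1 → r v n = 0 := by
    intro v hv
    have h1 := hX n (v + m + 1) (by omega) (by omega) (by omega)
    simp only [sh1] at h1
    rw [if_neg (show ¬ v + m + 1 < m by omega), if_pos (show m < v + m + 1 by omega),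
      show v + m + 1 - (m + 1) = v by omega, if_neg (lt_irrefl n), if_neg (lt_irrefl n),
      add_zero] at h1
    exact h1
  -- Main conclusion
  intro i q hi hq
  constructor
  · by_cases hnm : i = n ∧ q = m
    · rw [hnm.1, hnm.2]
      simp [sh1]
    · exact hX i q hi hq hnm
  · by_cases hp : Ypat n m i q
    · rcases hp with ⟨hi0, hqm⟩ | ⟨hqm, hin⟩ | ⟨hin, hq1, hq2⟩ | ⟨hqm, hi1, hi2⟩
      · subst hi0
        simp only [sh2, if_neg (show ¬(1 ≤ 0 ∧ 0 ≤ n) by omega),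
          if_neg (show ¬ n < 0 by omega), add_zero]
        rcases Nat.eq_zero_or_pos q with hq0 | hq0
        · subst hq0
          rw [if_neg (show ¬(1 ≤ 0 ∧ 0 ≤ m) by omega), if_neg (show ¬ m < 0 by omega)]
        · rw [if_pos (show 1 ≤ q ∧ q ≤ m by omega)]
          exact R1 q hq0 hqm 0 (by omega)
      · rw [hqm]
        simp only [sh2]
        rw [if_pos (show 1 ≤ m ∧ m ≤ m by omega)]
        rw [R1 m hm le_rfl i hin, zero_add]
        rcases Nat.eq_zero_or_pos i with hi0 | hi0
        · subst hi0
          rw [if_neg (show ¬(1 ≤ 0 ∧ 0 ≤ n) by omega), if_neg (show ¬ n < 0 by omega)]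
        · rw [if_pos (show 1 ≤ i ∧ i ≤ n by omega)]
          exact D1 i hi0 hin
      · rw [hin]
        simp only [sh2]
        rw [if_neg (show ¬(1 ≤ q ∧ q ≤ m) by omega), if_pos (show m < q by omega)]
        rw [D3 (q - m) (by omega), zero_add]
        rw [if_pos (show 1 ≤ n ∧ n ≤ n by omega)]
        -- show s (n + n) q = 0
        have h1 := hX (n - 1) q (by omega) (by omega) (by omega)
        simp only [sh1] at h1
        rw [if_neg (show ¬ q < m by omega), if_pos (show m < q by omega),
          if_pos (show n - 1 < n by omega), show n + 1 + (n - 1) = n + n by omega] at h1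
        rw [R2 (n - 1) (by omega) (q - (m + 1)) (by omega) (by omega), zero_add] at h1
        exact h1
      · rw [hqm]
        simp only [sh2]
        rw [if_pos (show 1 ≤ m ∧ m ≤ m by omega)]
        rw [R3 m hm le_rfl i (by omega) (by omega), zero_add]
        rw [if_neg (show ¬(1 ≤ i ∧ i ≤ n) by omega), if_pos (show n < i by omega)]
        exact D2 (i - n) (by omega)
    · exact hY i q hi hq hp
theorem core_dual (n m : ℕ) (hn : 1 ≤ n) (hm : 1 ≤ m) (U V : ℕ → ℕ → ℂ)
    (hK1 : ∀ u q, u ≤ 2 * n → q ≤ 2 * m →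
      sh1 n (fun a => U a q) u + sh2 n (fun a => V a q) u = 0)
    (hK2 : ∀ i v, i ≤ 2 * n → v ≤ 2 * m →
      sh1 m (fun b => U i b) v + sh2 m (fun b => V i b) v = 0)
    (hU : U n m = 0)
    (hV : ∀ i q, i ≤ 2 * n → q ≤ 2 * m → Ypat n m i q → V i q = 0) :
    ∀ i q, i ≤ 2 * n → q ≤ 2 * m → U i q = 0 ∧ V i q = 0 := by
  have K1a : ∀ q, q ≤ 2 * m → U (n + 1) q = 0 := by
    intro q hq
    have h := hK1 0 q (by omega) hq
    simp only [sh1, sh2] at h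
    rw [if_pos (show 0 < n by omega), if_neg (show ¬(1 ≤ 0 ∧ 0 ≤ n) by omega),
      if_neg (show ¬ n < 0 by omega), add_zero, show n + 1 + 0 = n + 1 by omega] at h
    exact h
  have K1b : ∀ a q, n + 2 ≤ a → a ≤ 2 * n → q ≤ 2 * m → U a q + V (a - 1) q = 0 := by
    intro a q ha1 ha2 hq
    have h := hK1 (a - n - 1) q (by omega) hq
    simp only [sh1, sh2] at h
    rw [if_pos (show a - n - 1 < n by omega), show n + 1 + (a - n - 1) = a by omega,
      if_pos (show 1 ≤ a - n - 1 ∧ a - n - 1 ≤ n by omega),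
      show n + (a - n - 1) = a - 1 by omega] at h
    exact h
  have K1c : ∀ q, q ≤ 2 * m → V (2 * n) q = 0 := by
    intro q hq
    have h := hK1 n q (by omega) hq
    simp only [sh1, sh2] at h
    rw [if_neg (show ¬ n < n by omega), if_neg (show ¬ n < n by omega), zero_add,
      if_pos (show 1 ≤ n ∧ n ≤ n by omega), show n + n = 2 * n by omega] at h
    exact h
  have K1d : ∀ a q, a ≤ n - 1 → q ≤ 2 * m → U a q + V (a + 1) q = 0 := by
    intro a q ha hq
    have h := hK1 (a + n + 1) q (by omega) hq
    simp only [sh1, sh2] at h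
    rw [if_neg (show ¬ a + n + 1 < n by omega), if_pos (show n < a + n + 1 by omega),
      show a + n + 1 - (n + 1) = a by omega,
      if_neg (show ¬(1 ≤ a + n + 1 ∧ a + n + 1 ≤ n) by omega),
      if_pos (show n < a + n + 1 by omega), show a + n + 1 - n = a + 1 by omega] at h
    exact h
  have K2a : ∀ i, i ≤ 2 * n → U i (m + 1) = 0 := by
    intro i hi
    have h := hK2 i 0 hi (by omega)
    simp only [sh1, sh2] at h
    rw [if_pos (show 0 < m by omega), if_neg (show ¬(1 ≤ 0 ∧ 0 ≤ m) by omega),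
      if_neg (show ¬ m < 0 by omega), add_zero, show m + 1 + 0 = m + 1 by omega] at h
    exact h
  have K2b : ∀ i b, i ≤ 2 * n → m + 2 ≤ b → b ≤ 2 * m → U i b + V i (b - 1) = 0 := by
    intro i b hi hb1 hb2
    have h := hK2 i (b - m - 1) hi (by omega)
    simp only [sh1, sh2] at h
    rw [if_pos (show b - m - 1 < m by omega), show m + 1 + (b - m - 1) = b by omega,
      if_pos (show 1 ≤ b - m - 1 ∧ b - m - 1 ≤ m by omega),
      show m + (b - m - 1) = b - 1 by omega] at h
    exact h
  have K2c : ∀ i, i ≤ 2 * n → V i (2 * m) = 0 := by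
    intro i hi
    have h := hK2 i m hi (by omega)
    simp only [sh1, sh2] at h
    rw [if_neg (show ¬ m < m by omega), if_neg (show ¬ m < m by omega), zero_add,
      if_pos (show 1 ≤ m ∧ m ≤ m by omega), show m + m = 2 * m by omega] at h
    exact h
  have K2d : ∀ i b, i ≤ 2 * n → b ≤ m - 1 → U i b + V i (b + 1) = 0 := by
    intro i b hi hb
    have h := hK2 i (b + m + 1) hi (by omega)
    simp only [sh1, sh2] at h
    rw [if_neg (show ¬ b + m + 1 < m by omega), if_pos (show m < b + m + 1 by omega),
      show b + m + 1 - (m + 1) = b by omega,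
      if_neg (show ¬(1 ≤ b + m + 1 ∧ b + m + 1 ≤ m) by omega),
      if_pos (show m < b + m + 1 by omega), show b + m + 1 - m = b + 1 by omega] at h
    exact h
  have RelA : ∀ a b, a ≤ n - 1 → b ≤ m - 1 → V (a + 1) b = V a (b + 1) := by
    intro a b ha hb
    have h1 := K1d a b ha (by omega)
    have h2 := K2d a b (by omega) hb
    linear_combination h1 - h2
  have RelC : ∀ a b, a ≤ n - 1 → m + 2 ≤ b → b ≤ 2 * m → V (a + 1) b = V a (b - 1) := by
    intro a b ha hb1 hb2
    have h1 := K1d a b ha hb2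
    have h2 := K2b a b (by omega) hb1 hb2
    linear_combination h1 - h2
  have RowN1 : ∀ c, 1 ≤ c → c ≤ 2 * m → V (n + 1) c = 0 := by
    intro c hc1 hc2
    rcases Nat.lt_or_ge c (m + 1) with hc | hc
    · have h1 := K2d (n + 1) (c - 1) (by omega) (by omega)
      have h2 := K1a (c - 1) (by omega)
      rw [show c - 1 + 1 = c by omega] at h1
      linear_combination h1 - h2
    · rcases Nat.lt_or_ge c (2 * m) with hc' | hc'
      · have h1 := K2b (n + 1) (c + 1) (by omega) (by omega) (by omega)
        have h2 := K1a (c + 1) (by omega)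
        rw [show c + 1 - 1 = c by omega] at h1
        linear_combination h1 - h2
      · rw [show c = 2 * m by omega]
        exact K2c (n + 1) (by omega)
  have ColM1 : ∀ a, 1 ≤ a → a ≤ 2 * n → V a (m + 1) = 0 := by
    intro a ha1 ha2
    rcases Nat.lt_or_ge a (n + 1) with ha | ha
    · have h1 := K1d (a - 1) (m + 1) (by omega) (by omega)
      have h2 := K2a (a - 1) (by omega)
      rw [show a - 1 + 1 = a by omega] at h1
      linear_combination h1 - h2
    · rcases Nat.lt_or_ge a (2 * n) with ha' | ha'
      · have h1 := K1b (a + 1) (m + 1) (by omega) (by omega) (by omega)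
        have h2 := K2a (a + 1) (by omega)
        rw [show a + 1 - 1 = a by omega] at h1
        linear_combination h1 - h2
      · rw [show a = 2 * n by omega]
        exact K1c (m + 1) (by omega)
  have RelD : ∀ a b, n + 1 ≤ a → a ≤ 2 * n - 1 → b ≤ m - 1 → V a b = V (a + 1) (b + 1) := by
    intro a b ha1 ha2 hb
    have h1 := K1b (a + 1) b (by omega) (by omega) (by omega)
    have h2 := K2d (a + 1) b (by omega) hb
    rw [show a + 1 - 1 = a by omega] at h1
    linear_combination h1 - h2
  have RelE : ∀ a b, n + 1 ≤ a → a ≤ 2 * n - 1 → m + 2 ≤ b → b ≤ 2 * m →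
      V a b = V (a + 1) (b - 1) := by
    intro a b ha1 ha2 hb1 hb2
    have h1 := K1b (a + 1) b (by omega) (by omega) hb2
    have h2 := K2b (a + 1) b (by omega) hb1 hb2
    rw [show a + 1 - 1 = a by omega] at h1
    linear_combination h1 - h2
  -- region lemmas
  have VTL : ∀ a, a ≤ n → ∀ b, b ≤ m → V a b = 0 := by
    intro a
    induction a using Nat.strong_induction_on with
    | _ a ih =>
      intro ha b hb
      rcases Nat.eq_zero_or_pos a with ha0 | ha0
      · exact hV a b (by omega) (by omega) (Or.inl ⟨ha0, hb⟩)
      · rcases Nat.lt_or_ge b m with hbm | hbm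
        · have h := RelA (a - 1) b (by omega) (by omega)
          rw [show a - 1 + 1 = a by omega] at h
          rw [h]
          exact ih (a - 1) (by omega) (by omega) (b + 1) (by omega)
        · exact hV a b (by omega) (by omega) (Or.inr (Or.inl ⟨by omega, ha⟩))
  have VTRlow : ∀ b, m + 1 ≤ b → b ≤ 2 * m → ∀ a, a ≤ n → b ≤ a + m → V a b = 0 := by
    intro b
    induction b using Nat.strong_induction_on with
    | _ b ih =>
      intro hb1 hb2 a ha hba
      rcases Nat.eq_or_lt_of_le hb1 with hb | hb
      · rw [← hb]
        exact ColM1 a (by omega) (by omega)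
      · have h := RelC (a - 1) b (by omega) (by omega) hb2
        rw [show a - 1 + 1 = a by omega] at h
        rw [h]
        exact ih (b - 1) (by omega) (by omega) (by omega) (a - 1) (by omega) (by omega)
  have VTRhigh : ∀ t a b, a ≤ n → b ≤ 2 * m → a + m + 1 ≤ b → n - a ≤ t → V a b = 0 := by
    intro t
    induction t with
    | zero =>
      intro a b ha hb hab ht
      have han : a = n := by omega
      subst han
      rcases Nat.lt_or_ge b (2 * m) with hb' | hb'
      · exact hV a b (by omega) (by omega) (Or.inr (Or.inr (Or.inl ⟨rfl, by omega, by omega⟩)))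
      · rw [show b = 2 * m by omega]
        exact K2c a (by omega)
    | succ t ih =>
      intro a b ha hb hab ht
      rcases Nat.eq_or_lt_of_le ha with han | han
      · rcases Nat.lt_or_ge b (2 * m) with hb' | hb'
        · exact hV a b (by omega) (by omega) (Or.inr (Or.inr (Or.inl ⟨by omega, by omega, by omega⟩)))
        · rw [show b = 2 * m by omega]
          exact K2c a (by omega)
      · rcases Nat.lt_or_ge b (2 * m) with hb' | hb'
        · have h := RelC a (b + 1) (by omega) (by omega) (by omega)
          rw [show b + 1 - 1 = b by omega] at h
          rw [← h]
          exact ih (a + 1) (b + 1) (by omega) (by omega) (by omega) (by omega)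
        · rw [show b = 2 * m by omega]
          exact K2c a (by omega)
  have VBLlow : ∀ a, n + 1 ≤ a → a ≤ 2 * n → ∀ b, b ≤ m → a ≤ b + n → V a b = 0 := by
    intro a
    induction a using Nat.strong_induction_on with
    | _ a ih =>
      intro ha1 ha2 b hb hab
      rcases Nat.eq_or_lt_of_le ha1 with ha | ha
      · rw [← ha]
        exact RowN1 b (by omega) (by omega)
      · have h := RelD (a - 1) (b - 1) (by omega) (by omega) (by omega)
        rw [show a - 1 + 1 = a by omega, show b - 1 + 1 = b by omega] at h
        rw [← h]
        exact ih (a - 1) (by omega) (by omega) (by omega) (b - 1) (by omega) (by omega)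
  have VBLhigh : ∀ t a b, n + 1 ≤ a → a ≤ 2 * n → b ≤ m → b + n + 1 ≤ a → m - b ≤ t →
      V a b = 0 := by
    intro t
    induction t with
    | zero =>
      intro a b ha1 ha2 hb hab ht
      have hbm : b = m := by omega
      subst hbm
      rcases Nat.lt_or_ge a (2 * n) with ha' | ha'
      · exact hV a b (by omega) (by omega) (Or.inr (Or.inr (Or.inr ⟨rfl, by omega, by omega⟩)))
      · rw [show a = 2 * n by omega]
        exact K1c b (by omega)
    | succ t ih =>
      intro a b ha1 ha2 hb hab ht
      rcases Nat.eq_or_lt_of_le hb with hbm | hbm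
      · rcases Nat.lt_or_ge a (2 * n) with ha' | ha'
        · exact hV a b (by omega) (by omega) (Or.inr (Or.inr (Or.inr ⟨by omega, by omega, by omega⟩)))
        · rw [show a = 2 * n by omega]
          exact K1c b (by omega)
      · rcases Nat.lt_or_ge a (2 * n) with ha' | ha'
        · have h := RelD a b (by omega) (by omega) (by omega)
          rw [h]
          exact ih (a + 1) (b + 1) (by omega) (by omega) (by omega) (by omega) (by omega)
        · rw [show a = 2 * n by omega]
          exact K1c b (by omega)
  have VBR : ∀ b, m + 1 ≤ b → b ≤ 2 * m → ∀ a, n + 1 ≤ a → a ≤ 2 * n → V a b = 0 := by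
    intro b
    induction b using Nat.strong_induction_on with
    | _ b ih =>
      intro hb1 hb2 a ha1 ha2
      rcases Nat.eq_or_lt_of_le hb1 with hb | hb
      · rw [← hb]
        exact ColM1 a (by omega) (by omega)
      · rcases Nat.lt_or_ge a (2 * n) with ha' | ha'
        · have h := RelE a b (by omega) (by omega) (by omega) hb2
          rw [h]
          exact ih (b - 1) (by omega) (by omega) (by omega) (a + 1) (by omega) (by omega)
        · rw [show a = 2 * n by omega]
          exact K1c b (by omega)
  have Vall : ∀ a b, a ≤ 2 * n → b ≤ 2 * m → V a b = 0 := by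
    intro a b ha hb
    rcases Nat.lt_or_ge n a with han | han
    · rcases Nat.lt_or_ge m b with hbm | hbm
      · exact VBR b (by omega) hb a (by omega) ha
      · rcases Nat.lt_or_ge (b + n) a with h | h
        · exact VBLhigh m a b (by omega) ha hbm (by omega) (by omega)
        · exact VBLlow a (by omega) ha b hbm h
    · rcases Nat.lt_or_ge m b with hbm | hbm
      · rcases Nat.lt_or_ge (a + m) b with h | h
        · exact VTRhigh n a b han hb (by omega) (by omega)
        · exact VTRlow b (by omega) hb a han h
      · exact VTL a han b hbm
  have Uall : ∀ a b, a ≤ 2 * n → b ≤ 2 * m → U a b = 0 := by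
    intro a b ha hb
    rcases Nat.lt_or_ge a n with han | han
    · have h := K1d a b (by omega) hb
      have hv := Vall (a + 1) b (by omega) hb
      linear_combination h - hv
    · rcases Nat.eq_or_lt_of_le han with han' | han'
      · -- a = n
        rcases Nat.lt_or_ge b m with hbm | hbm
        · have h := K2d a b ha (by omega)
          have hv := Vall a (b + 1) ha (by omega)
          linear_combination h - hv
        · rcases Nat.eq_or_lt_of_le hbm with hbm' | hbm'
          · rw [← han', ← hbm']
            exact hU
          · rcases Nat.eq_or_lt_of_le (show m + 1 ≤ b by omega) with hb1 | hb1
            · rw [← hb1]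
              exact K2a a ha
            · have h := K2b a b ha (by omega) hb
              have hv := Vall a (b - 1) ha (by omega)
              linear_combination h - hv
      · rcases Nat.eq_or_lt_of_le (show n + 1 ≤ a by omega) with ha1 | ha1
        · rw [← ha1]
          exact K1a b hb
        · have h := K1b a b (by omega) ha hb
          have hv := Vall (a - 1) b (by omega) hb
          linear_combination h - hv
  intro i q hi hq
  exact ⟨Uall i q hi hq, Vall i q hi hq⟩

theorem transpose_std {a b : Type*} [DecidableEq a] [DecidableEq b] (i : a) (j : b) (c : ℂ) :
    (Matrix.single i j c)ᵀ = Matrix.single j i c := by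
  ext x y
  simp only [Matrix.transpose_apply, Matrix.single, Matrix.of_apply, and_comm]

theorem SL1_lt (k : ℕ) {c : ℕ} (u : Fin (2 * k + 1)) (q : Fin c) (h : (u : ℕ) < k) :
    L1M k * Matrix.single u q (1 : ℂ) =
      Matrix.single (⟨k + 1 + (u : ℕ), by omega⟩ : Fin (2 * k + 1)) q 1 := by
  ext i b
  rw [mul_L1]
  simp only [Matrix.single, Matrix.of_apply]
  split_ifs <;> first | rfl | (exfalso; simp only [Fin.ext_iff, Fin.val_mk] at *; omega)

theorem SL1_eq (k : ℕ) {c : ℕ} (u : Fin (2 * k + 1)) (q : Fin c) (h : (u : ℕ) = k) :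
    L1M k * Matrix.single u q (1 : ℂ) = 0 := by
  ext i b
  rw [mul_L1]
  simp only [Matrix.single, Matrix.of_apply, Matrix.zero_apply]
  split_ifs <;> first | rfl | (exfalso; simp only [Fin.ext_iff, Fin.val_mk] at *; omega)

theorem SL1_gt (k : ℕ) {c : ℕ} (u : Fin (2 * k + 1)) (q : Fin c) (h : k < (u : ℕ)) :
    L1M k * Matrix.single u q (1 : ℂ) =
      Matrix.single (⟨(u : ℕ) - (k + 1), by have := u.isLt; omega⟩ : Fin (2 * k + 1)) q 1 := by
  ext i b
  rw [mul_L1]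
  simp only [Matrix.single, Matrix.of_apply]
  split_ifs <;> first | rfl | (exfalso; simp only [Fin.ext_iff, Fin.val_mk] at *; omega)

theorem SL2_zero (k : ℕ) {c : ℕ} (u : Fin (2 * k + 1)) (q : Fin c) (h : (u : ℕ) = 0)
    (hk : 1 ≤ k) : L2M k * Matrix.single u q (1 : ℂ) = 0 := by
  ext i b
  rw [mul_L2]
  simp only [Matrix.single, Matrix.of_apply, Matrix.zero_apply]
  split_ifs <;> first | rfl | (exfalso; simp only [Fin.ext_iff, Fin.val_mk] at *; omega)

theorem SL2_mid (k : ℕ) {c : ℕ} (u : Fin (2 * k + 1)) (q : Fin c)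
    (h : 1 ≤ (u : ℕ) ∧ (u : ℕ) ≤ k) :
    L2M k * Matrix.single u q (1 : ℂ) =
      Matrix.single (⟨k + (u : ℕ), by omega⟩ : Fin (2 * k + 1)) q 1 := by
  ext i b
  rw [mul_L2]
  simp only [Matrix.single, Matrix.of_apply]
  split_ifs <;> first | rfl | (exfalso; simp only [Fin.ext_iff, Fin.val_mk] at *; omega)

theorem SL2_gt (k : ℕ) {c : ℕ} (u : Fin (2 * k + 1)) (q : Fin c) (h : k < (u : ℕ)) :
    L2M k * Matrix.single u q (1 : ℂ) =
      Matrix.single (⟨(u : ℕ) - k, by have := u.isLt; omega⟩ : Fin (2 * k + 1)) q 1 := by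
  ext i b
  rw [mul_L2]
  simp only [Matrix.single, Matrix.of_apply]
  split_ifs <;> first | rfl | (exfalso; simp only [Fin.ext_iff, Fin.val_mk] at *; omega)

theorem SR1_lt (k : ℕ) {c : ℕ} (v : Fin (2 * k + 1)) (i : Fin c) (h : (v : ℕ) < k) :
    Matrix.single i v (1 : ℂ) * L1M k =
      Matrix.single i (⟨k + 1 + (v : ℕ), by omega⟩ : Fin (2 * k + 1)) 1 := by
  have h1 := congrArg Matrix.transpose (SL1_lt k v i h)
  rwa [Matrix.transpose_mul, transpose_std, L1M_isSymm k, transpose_std] at h1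

theorem SR1_eq (k : ℕ) {c : ℕ} (v : Fin (2 * k + 1)) (i : Fin c) (h : (v : ℕ) = k) :
    Matrix.single i v (1 : ℂ) * L1M k = 0 := by
  have h1 := congrArg Matrix.transpose (SL1_eq k v i h)
  rwa [Matrix.transpose_mul, transpose_std, L1M_isSymm k, Matrix.transpose_zero] at h1

theorem SR1_gt (k : ℕ) {c : ℕ} (v : Fin (2 * k + 1)) (i : Fin c) (h : k < (v : ℕ)) :
    Matrix.single i v (1 : ℂ) * L1M k =
      Matrix.single i (⟨(v : ℕ) - (k + 1), by have := v.isLt; omega⟩ : Fin (2 * k + 1)) 1 := by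
  have h1 := congrArg Matrix.transpose (SL1_gt k v i h)
  rwa [Matrix.transpose_mul, transpose_std, L1M_isSymm k, transpose_std] at h1

theorem SR2_zero (k : ℕ) {c : ℕ} (v : Fin (2 * k + 1)) (i : Fin c) (h : (v : ℕ) = 0)
    (hk : 1 ≤ k) : Matrix.single i v (1 : ℂ) * L2M k = 0 := by
  have h1 := congrArg Matrix.transpose (SL2_zero k v i h hk)
  rwa [Matrix.transpose_mul, transpose_std, L2M_isSymm k, Matrix.transpose_zero] at h1

theorem SR2_mid (k : ℕ) {c : ℕ} (v : Fin (2 * k + 1)) (i : Fin c)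
    (h : 1 ≤ (v : ℕ) ∧ (v : ℕ) ≤ k) :
    Matrix.single i v (1 : ℂ) * L2M k =
      Matrix.single i (⟨k + (v : ℕ), by omega⟩ : Fin (2 * k + 1)) 1 := by
  have h1 := congrArg Matrix.transpose (SL2_mid k v i h)
  rwa [Matrix.transpose_mul, transpose_std, L2M_isSymm k, transpose_std] at h1

theorem SR2_gt (k : ℕ) {c : ℕ} (v : Fin (2 * k + 1)) (i : Fin c) (h : k < (v : ℕ)) :
    Matrix.single i v (1 : ℂ) * L2M k =
      Matrix.single i (⟨(v : ℕ) - k, by have := v.isLt; omega⟩ : Fin (2 * k + 1)) 1 := by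
  have h1 := congrArg Matrix.transpose (SL2_gt k v i h)
  rwa [Matrix.transpose_mul, transpose_std, L2M_isSymm k, transpose_std] at h1


theorem mem_entryPattern {ι κ : Type} (S1 S2 : Set (ι × κ)) (x : Matrix ι κ ℂ × Matrix ι κ ℂ) :
    x ∈ entryPattern S1 S2 ↔
      ((∀ i j, (i, j) ∉ S1 → x.1 i j = 0) ∧ (∀ i j, (i, j) ∉ S2 → x.2 i j = 0)) := Iff.rfl

theorem exists_dual_of_not_mem {M : Type*} [AddCommGroup M] [Module ℂ M]
    (T : Submodule ℂ M) (x : M) (hx : x ∉ T) :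
    ∃ f : Module.Dual ℂ M, (∀ y ∈ T, f y = 0) ∧ f x ≠ 0 := by
  have hq0 : T.mkQ x ≠ 0 := by
    rw [Submodule.mkQ_apply]
    intro h
    exact hx ((Submodule.Quotient.mk_eq_zero T).mp h)
  have hno : ¬ ∀ φ : Module.Dual ℂ (M ⧸ T), φ (T.mkQ x) = 0 := by
    intro hall
    exact hq0 ((Module.forall_dual_apply_eq_zero_iff ℂ (T.mkQ x)).mp hall)
  obtain ⟨φ, hφ⟩ := not_forall.mp hno
  refine ⟨φ.comp T.mkQ, fun y hy => ?_, hφ⟩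
  rw [LinearMap.comp_apply, Submodule.mkQ_apply, (Submodule.Quotient.mk_eq_zero T).mpr hy,
    map_zero]

end

/-- **Off-diagonal blocks `L_n` vs `L_m`.** With
`W = {(Rᵀ L_m^{(1)} + L_n^{(1)} S, Rᵀ L_m^{(2)} + L_n^{(2)} S)}` and `P` the pairs
`(X, Y)` of `(2n+1) × (2m+1)` matrices with `X` supported on the single position
`(n+1, m+1)` and `Y` supported on
`{(1,q) : q ≤ m+1} ∪ {(p, m+1) : p ≤ n+1} ∪ {(n+1, m+1+q) : n+1 ≤ q ≤ m−1} ∪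
{(n+1+p, m+1) : m+1 ≤ p ≤ n−1}` (1-based indices), one has
`ℂ^{(2n+1)×(2m+1)} × ℂ^{(2n+1)×(2m+1)} = W ⊕ P`. -/
theorem L_L_offdiagonal (n m : ℕ) (hn : 0 < n) (hm : 0 < m) :
    Disjoint (WSpace (L1M n) (L2M n) (L1M m) (L2M m))
      (entryPattern
        {pq : Fin (2 * n + 1) × Fin (2 * m + 1) | (pq.1 : ℕ) = n ∧ (pq.2 : ℕ) = m}
        {pq : Fin (2 * n + 1) × Fin (2 * m + 1) |
          ((pq.1 : ℕ) = 0 ∧ (pq.2 : ℕ) ≤ m) ∨ ((pq.2 : ℕ) = m ∧ (pq.1 : ℕ) ≤ n) ∨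
          ((pq.1 : ℕ) = n ∧ n + m + 2 ≤ (pq.2 : ℕ) + 1 ∧ (pq.2 : ℕ) + 1 ≤ 2 * m) ∨
          ((pq.2 : ℕ) = m ∧ n + m + 2 ≤ (pq.1 : ℕ) + 1 ∧ (pq.1 : ℕ) + 1 ≤ 2 * n)}) ∧
    WSpace (L1M n) (L2M n) (L1M m) (L2M m) ⊔
      entryPattern
        {pq : Fin (2 * n + 1) × Fin (2 * m + 1) | (pq.1 : ℕ) = n ∧ (pq.2 : ℕ) = m}
        {pq : Fin (2 * n + 1) × Fin (2 * m + 1) |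
          ((pq.1 : ℕ) = 0 ∧ (pq.2 : ℕ) ≤ m) ∨ ((pq.2 : ℕ) = m ∧ (pq.1 : ℕ) ≤ n) ∨
          ((pq.1 : ℕ) = n ∧ n + m + 2 ≤ (pq.2 : ℕ) + 1 ∧ (pq.2 : ℕ) + 1 ≤ 2 * m) ∨
          ((pq.2 : ℕ) = m ∧ n + m + 2 ≤ (pq.1 : ℕ) + 1 ∧ (pq.1 : ℕ) + 1 ≤ 2 * n)} = ⊤ := by
  have hn1 : 1 ≤ n := hn
  have hm1 : 1 ≤ m := hm
  constructor
  · -- Disjointness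
    rw [Submodule.disjoint_def]
    intro x hxW hxP
    rw [WSpace, LinearMap.mem_range] at hxW
    obtain ⟨⟨S, R⟩, rfl⟩ := hxW
    rw [mem_entryPattern] at hxP
    obtain ⟨hP1, hP2⟩ := hxP
    obtain ⟨sN, hsN⟩ : ∃ sN : ℕ → ℕ → ℂ, ∀ a b (h1 : a < 2 * n + 1) (h2 : b < 2 * m + 1),
        sN a b = S ⟨a, h1⟩ ⟨b, h2⟩ :=
      ⟨fun a b => if h : a < 2 * n + 1 ∧ b < 2 * m + 1 then S ⟨a, h.1⟩ ⟨b, h.2⟩ else 0,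
        fun a b h1 h2 => dif_pos ⟨h1, h2⟩⟩
    obtain ⟨rN, hrN⟩ : ∃ rN : ℕ → ℕ → ℂ, ∀ a b (h1 : a < 2 * m + 1) (h2 : b < 2 * n + 1),
        rN a b = R ⟨a, h1⟩ ⟨b, h2⟩ :=
      ⟨fun a b => if h : a < 2 * m + 1 ∧ b < 2 * n + 1 then R ⟨a, h.1⟩ ⟨b, h.2⟩ else 0,
        fun a b h1 h2 => dif_pos ⟨h1, h2⟩⟩
    have Scongr : ∀ (a a' b b' : ℕ) (ha : a < 2 * n + 1) (ha' : a' < 2 * n + 1)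
        (hb : b < 2 * m + 1) (hb' : b' < 2 * m + 1), a = a' → b = b' →
        S ⟨a, ha⟩ ⟨b, hb⟩ = S ⟨a', ha'⟩ ⟨b', hb'⟩ := by
      intro a a' b b' ha ha' hb hb' h1 h2
      subst h1; subst h2; rfl
    have Rcongr : ∀ (a a' b b' : ℕ) (ha : a < 2 * m + 1) (ha' : a' < 2 * m + 1)
        (hb : b < 2 * n + 1) (hb' : b' < 2 * n + 1), a = a' → b = b' →
        R ⟨a, ha⟩ ⟨b, hb⟩ = R ⟨a', ha'⟩ ⟨b', hb'⟩ := by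
      intro a a' b b' ha ha' hb hb' h1 h2
      subst h1; subst h2; rfl
    have e1 : ∀ (i : Fin (2 * n + 1)) (q : Fin (2 * m + 1)),
        (L1M n * S) i q = sh1 n (fun u => sN u (q : ℕ)) (i : ℕ) := by
      intro i q
      rw [mul_L1]
      simp only [sh1]
      split_ifs with h1 h2
      · rw [hsN (n + 1 + (i : ℕ)) (q : ℕ) (by omega) q.isLt]
        exact Scongr _ _ _ _ _ _ _ _ (by omega) rfl
      · rw [hsN ((i : ℕ) - (n + 1)) (q : ℕ) (by have := i.isLt; omega) q.isLt]
      · rfl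
    have e2 : ∀ (i : Fin (2 * n + 1)) (q : Fin (2 * m + 1)),
        (L2M n * S) i q = sh2 n (fun u => sN u (q : ℕ)) (i : ℕ) := by
      intro i q
      rw [mul_L2]
      simp only [sh2]
      split_ifs with h1 h2
      · rw [hsN (n + (i : ℕ)) (q : ℕ) (by omega) q.isLt]
        exact Scongr _ _ _ _ _ _ _ _ (by omega) rfl
      · rw [hsN ((i : ℕ) - n) (q : ℕ) (by have := i.isLt; omega) q.isLt]
      · rfl
    have e3 : ∀ (i : Fin (2 * n + 1)) (q : Fin (2 * m + 1)),
        (Rᵀ * L1M m) i q = sh1 m (fun v => rN v (i : ℕ)) (q : ℕ) := by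
      intro i q
      rw [transpose_mul_symm R (L1M m) (L1M_isSymm m), mul_L1]
      simp only [sh1]
      split_ifs with h1 h2
      · rw [hrN (m + 1 + (q : ℕ)) (i : ℕ) (by omega) i.isLt]
        exact Rcongr _ _ _ _ _ _ _ _ (by omega) rfl
      · rw [hrN ((q : ℕ) - (m + 1)) (i : ℕ) (by have := q.isLt; omega) i.isLt]
      · rfl
    have e4 : ∀ (i : Fin (2 * n + 1)) (q : Fin (2 * m + 1)),
        (Rᵀ * L2M m) i q = sh2 m (fun v => rN v (i : ℕ)) (q : ℕ) := by
      intro i q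
      rw [transpose_mul_symm R (L2M m) (L2M_isSymm m), mul_L2]
      simp only [sh2]
      split_ifs with h1 h2
      · rw [hrN (m + (q : ℕ)) (i : ℕ) (by omega) i.isLt]
        exact Rcongr _ _ _ _ _ _ _ _ (by omega) rfl
      · rw [hrN ((q : ℕ) - m) (i : ℕ) (by have := q.isLt; omega) i.isLt]
      · rfl
    have hX : ∀ a b, a ≤ 2 * n → b ≤ 2 * m → ¬(a = n ∧ b = m) →
        sh1 m (fun v => rN v a) b + sh1 n (fun u => sN u b) a = 0 := by
      intro a b ha hb hne
      have h := hP1 ⟨a, by omega⟩ ⟨b, by omega⟩ hne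
      rw [show ((offMap (L1M n) (L2M n) (L1M m) (L2M m)) (S, R)).1 =
          Rᵀ * L1M m + L1M n * S from rfl, Matrix.add_apply, e3, e1] at h
      exact h
    have hY : ∀ a b, a ≤ 2 * n → b ≤ 2 * m → ¬ Ypat n m a b →
        sh2 m (fun v => rN v a) b + sh2 n (fun u => sN u b) a = 0 := by
      intro a b ha hb hne
      have h := hP2 ⟨a, by omega⟩ ⟨b, by omega⟩ hne
      rw [show ((offMap (L1M n) (L2M n) (L1M m) (L2M m)) (S, R)).2 =
          Rᵀ * L2M m + L2M n * S from rfl, Matrix.add_apply, e4, e2] at h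
      exact h
    have core := core_disjoint n m hn1 hm1 sN rN hX hY
    have h1 : Rᵀ * L1M m + L1M n * S = 0 := by
      ext i q
      rw [Matrix.add_apply, e3, e1, Matrix.zero_apply]
      exact (core (i : ℕ) (q : ℕ) (by have := i.isLt; omega) (by have := q.isLt; omega)).1
    have h2 : Rᵀ * L2M m + L2M n * S = 0 := by
      ext i q
      rw [Matrix.add_apply, e4, e2, Matrix.zero_apply]
      exact (core (i : ℕ) (q : ℕ) (by have := i.isLt; omega) (by have := q.isLt; omega)).2
    exact Prod.ext h1 h2
  · -- Spanning
    by_contra hne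
    have hlt := lt_top_iff_ne_top.mpr hne
    obtain ⟨x, -, hx⟩ := SetLike.exists_of_lt hlt
    obtain ⟨f, hfT, hfx⟩ := exists_dual_of_not_mem _ x hx
    have hfW : ∀ (S : Matrix (Fin (2 * n + 1)) (Fin (2 * m + 1)) ℂ)
        (R : Matrix (Fin (2 * m + 1)) (Fin (2 * n + 1)) ℂ),
        f ((offMap (L1M n) (L2M n) (L1M m) (L2M m)) (S, R)) = 0 := by
      intro S R
      exact hfT _ (Submodule.mem_sup_left (LinearMap.mem_range.mpr ⟨(S, R), rfl⟩))
    obtain ⟨UN, hUN⟩ : ∃ UN : ℕ → ℕ → ℂ, ∀ a b (h1 : a < 2 * n + 1) (h2 : b < 2 * m + 1),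
        UN a b = f (Matrix.single ⟨a, h1⟩ ⟨b, h2⟩ 1, 0) :=
      ⟨fun a b => if h : a < 2 * n + 1 ∧ b < 2 * m + 1 then
          f (Matrix.single ⟨a, h.1⟩ ⟨b, h.2⟩ 1, 0) else 0,
        fun a b h1 h2 => dif_pos ⟨h1, h2⟩⟩
    obtain ⟨VN, hVN⟩ : ∃ VN : ℕ → ℕ → ℂ, ∀ a b (h1 : a < 2 * n + 1) (h2 : b < 2 * m + 1),
        VN a b = f (0, Matrix.single ⟨a, h1⟩ ⟨b, h2⟩ 1) :=
      ⟨fun a b => if h : a < 2 * n + 1 ∧ b < 2 * m + 1 then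
          f (0, Matrix.single ⟨a, h.1⟩ ⟨b, h.2⟩ 1) else 0,
        fun a b h1 h2 => dif_pos ⟨h1, h2⟩⟩
    have fsplit : ∀ (A B : Matrix (Fin (2 * n + 1)) (Fin (2 * m + 1)) ℂ),
        f (A, B) = f (A, 0) + f (0, B) := by
      intro A B
      rw [← map_add]
      congr 1
      rw [Prod.mk_add_mk, add_zero, zero_add]
    have hoff : ∀ (u' : Fin (2 * n + 1)) (q' : Fin (2 * m + 1)),
        (offMap (L1M n) (L2M n) (L1M m) (L2M m)) (Matrix.single u' q' (1 : ℂ), 0) =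
          (L1M n * Matrix.single u' q' (1 : ℂ), L2M n * Matrix.single u' q' (1 : ℂ)) := by
      intro u' q'
      have hrfl : (offMap (L1M n) (L2M n) (L1M m) (L2M m)) (Matrix.single u' q' (1 : ℂ), 0) =
          ((0 : Matrix (Fin (2 * m + 1)) (Fin (2 * n + 1)) ℂ)ᵀ * L1M m +
            L1M n * Matrix.single u' q' (1 : ℂ),
           (0 : Matrix (Fin (2 * m + 1)) (Fin (2 * n + 1)) ℂ)ᵀ * L2M m +
            L2M n * Matrix.single u' q' (1 : ℂ)) := rfl
      rw [hrfl, Matrix.transpose_zero, Matrix.zero_mul, Matrix.zero_mul, zero_add, zero_add]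
    have hoffR : ∀ (v' : Fin (2 * m + 1)) (i' : Fin (2 * n + 1)),
        (offMap (L1M n) (L2M n) (L1M m) (L2M m)) (0, Matrix.single v' i' (1 : ℂ)) =
          (Matrix.single i' v' (1 : ℂ) * L1M m, Matrix.single i' v' (1 : ℂ) * L2M m) := by
      intro v' i'
      have hrfl : (offMap (L1M n) (L2M n) (L1M m) (L2M m)) (0, Matrix.single v' i' (1 : ℂ)) =
          ((Matrix.single v' i' (1 : ℂ))ᵀ * L1M m +
            L1M n * (0 : Matrix (Fin (2 * n + 1)) (Fin (2 * m + 1)) ℂ),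
           (Matrix.single v' i' (1 : ℂ))ᵀ * L2M m +
            L2M n * (0 : Matrix (Fin (2 * n + 1)) (Fin (2 * m + 1)) ℂ)) := rfl
      rw [hrfl, transpose_std, Matrix.mul_zero, Matrix.mul_zero, add_zero, add_zero]
    have hK1 : ∀ u q, u ≤ 2 * n → q ≤ 2 * m →
        sh1 n (fun a => UN a q) u + sh2 n (fun a => VN a q) u = 0 := by
      intro u q hu hq
      have h0 := hfW (Matrix.single ⟨u, by omega⟩ ⟨q, by omega⟩ 1) 0
      rw [hoff] at h0
      simp only [sh1, sh2]
      rcases Nat.lt_or_ge u n with h1 | h1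
      · rw [SL1_lt n ⟨u, by omega⟩ ⟨q, by omega⟩ h1] at h0
        rcases Nat.eq_zero_or_pos u with h2 | h2
        · rw [SL2_zero n ⟨u, by omega⟩ ⟨q, by omega⟩ h2 hn1] at h0
          rw [if_pos h1, if_neg (show ¬(1 ≤ u ∧ u ≤ n) by omega),
            if_neg (show ¬ n < u by omega), add_zero, hUN (n + 1 + u) q (by omega) (by omega)]
          exact h0
        · have hc : 1 ≤ u ∧ u ≤ n := by omega
          rw [SL2_mid n ⟨u, by omega⟩ ⟨q, by omega⟩ hc] at h0
          rw [fsplit] at h0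
          rw [if_pos h1, if_pos hc, hUN (n + 1 + u) q (by omega) (by omega),
            hVN (n + u) q (by omega) (by omega)]
          exact h0
      · rcases Nat.eq_or_lt_of_le h1 with h2 | h2
        · have hc : 1 ≤ u ∧ u ≤ n := by omega
          rw [SL1_eq n ⟨u, by omega⟩ ⟨q, by omega⟩ h2.symm] at h0
          rw [SL2_mid n ⟨u, by omega⟩ ⟨q, by omega⟩ hc] at h0
          rw [if_neg (show ¬ u < n by omega), if_neg (show ¬ n < u by omega), zero_add,
            if_pos hc, hVN (n + u) q (by omega) (by omega)]
          exact h0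
        · rw [SL1_gt n ⟨u, by omega⟩ ⟨q, by omega⟩ h2] at h0
          rw [SL2_gt n ⟨u, by omega⟩ ⟨q, by omega⟩ h2] at h0
          rw [fsplit] at h0
          rw [if_neg (show ¬ u < n by omega), if_pos h2,
            if_neg (show ¬(1 ≤ u ∧ u ≤ n) by omega), if_pos h2,
            hUN (u - (n + 1)) q (by omega) (by omega), hVN (u - n) q (by omega) (by omega)]
          exact h0
    have hK2 : ∀ i v, i ≤ 2 * n → v ≤ 2 * m →
        sh1 m (fun b => UN i b) v + sh2 m (fun b => VN i b) v = 0 := by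
      intro i v hi hv
      have h0 := hfW 0 (Matrix.single ⟨v, by omega⟩ ⟨i, by omega⟩ 1)
      rw [hoffR] at h0
      simp only [sh1, sh2]
      rcases Nat.lt_or_ge v m with h1 | h1
      · rw [SR1_lt m ⟨v, by omega⟩ ⟨i, by omega⟩ h1] at h0
        rcases Nat.eq_zero_or_pos v with h2 | h2
        · rw [SR2_zero m ⟨v, by omega⟩ ⟨i, by omega⟩ h2 hm1] at h0
          rw [if_pos h1, if_neg (show ¬(1 ≤ v ∧ v ≤ m) by omega),
            if_neg (show ¬ m < v by omega), add_zero, hUN i (m + 1 + v) (by omega) (by omega)]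
          exact h0
        · have hc : 1 ≤ v ∧ v ≤ m := by omega
          rw [SR2_mid m ⟨v, by omega⟩ ⟨i, by omega⟩ hc] at h0
          rw [fsplit] at h0
          rw [if_pos h1, if_pos hc, hUN i (m + 1 + v) (by omega) (by omega),
            hVN i (m + v) (by omega) (by omega)]
          exact h0
      · rcases Nat.eq_or_lt_of_le h1 with h2 | h2
        · have hc : 1 ≤ v ∧ v ≤ m := by omega
          rw [SR1_eq m ⟨v, by omega⟩ ⟨i, by omega⟩ h2.symm] at h0
          rw [SR2_mid m ⟨v, by omega⟩ ⟨i, by omega⟩ hc] at h0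
          rw [if_neg (show ¬ v < m by omega), if_neg (show ¬ m < v by omega), zero_add,
            if_pos hc, hVN i (m + v) (by omega) (by omega)]
          exact h0
        · rw [SR1_gt m ⟨v, by omega⟩ ⟨i, by omega⟩ h2] at h0
          rw [SR2_gt m ⟨v, by omega⟩ ⟨i, by omega⟩ h2] at h0
          rw [fsplit] at h0
          rw [if_neg (show ¬ v < m by omega), if_pos h2,
            if_neg (show ¬(1 ≤ v ∧ v ≤ m) by omega), if_pos h2,
            hUN i (v - (m + 1)) (by omega) (by omega), hVN i (v - m) (by omega) (by omega)]
          exact h0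
    have hUnm : UN n m = 0 := by
      rw [hUN n m (by omega) (by omega)]
      apply hfT
      apply Submodule.mem_sup_right
      rw [mem_entryPattern]
      refine ⟨fun i j hij => ?_, fun i j _ => rfl⟩
      show Matrix.single _ _ (1 : ℂ) i j = 0
      simp only [Matrix.single, Matrix.of_apply]
      rw [if_neg]
      rintro ⟨hh1, hh2⟩
      exact hij ⟨by rw [← hh1], by rw [← hh2]⟩
    have hVp : ∀ a b, a ≤ 2 * n → b ≤ 2 * m → Ypat n m a b → VN a b = 0 := by
      intro a b ha hb hYp
      rw [hVN a b (by omega) (by omega)]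
      apply hfT
      apply Submodule.mem_sup_right
      rw [mem_entryPattern]
      refine ⟨fun i j _ => rfl, fun i j hij => ?_⟩
      show Matrix.single _ _ (1 : ℂ) i j = 0
      simp only [Matrix.single, Matrix.of_apply]
      rw [if_neg]
      rintro ⟨hh1, hh2⟩
      apply hij
      rw [← hh1, ← hh2]
      exact hYp
    have hcore := core_dual n m hn1 hm1 UN VN hK1 hK2 hUnm hVp
    have hstd1 : ∀ (i : Fin (2 * n + 1)) (j : Fin (2 * m + 1)),
        f (Matrix.single i j 1, 0) = 0 := by
      intro i j
      have h := (hcore (i : ℕ) (j : ℕ) (by have := i.isLt; omega) (by have := j.isLt; omega)).1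
      rw [hUN (i : ℕ) (j : ℕ) i.isLt j.isLt] at h
      exact h
    have hstd2 : ∀ (i : Fin (2 * n + 1)) (j : Fin (2 * m + 1)),
        f (0, Matrix.single i j 1) = 0 := by
      intro i j
      have h := (hcore (i : ℕ) (j : ℕ) (by have := i.isLt; omega) (by have := j.isLt; omega)).2
      rw [hVN (i : ℕ) (j : ℕ) i.isLt j.isLt] at h
      exact h
    have expand : ∀ (g : Matrix (Fin (2 * n + 1)) (Fin (2 * m + 1)) ℂ →ₗ[ℂ] ℂ)
        (X : Matrix (Fin (2 * n + 1)) (Fin (2 * m + 1)) ℂ),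
        g X = ∑ i, ∑ j, X i j • g (Matrix.single i j 1) := by
      intro g X
      conv_lhs => rw [Matrix.matrix_eq_sum_single X]
      rw [map_sum]
      refine Finset.sum_congr rfl fun i _ => ?_
      rw [map_sum]
      refine Finset.sum_congr rfl fun j _ => ?_
      rw [show Matrix.single i j (X i j) = X i j • Matrix.single i j (1 : ℂ) by
        rw [Matrix.smul_single, smul_eq_mul, mul_one], _root_.map_smul]
    have hfall : f x = 0 := by
      obtain ⟨X, Y⟩ := x
      have hXpart : f (X, 0) = 0 := by
        have h := expand (f.comp (LinearMap.inl ℂ _ _)) X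
        simp only [LinearMap.comp_apply, LinearMap.inl_apply] at h
        rw [h]
        refine Finset.sum_eq_zero fun i _ => Finset.sum_eq_zero fun j _ => ?_
        rw [hstd1, smul_zero]
      have hYpart : f (0, Y) = 0 := by
        have h := expand (f.comp (LinearMap.inr ℂ _ _)) Y
        simp only [LinearMap.comp_apply, LinearMap.inr_apply] at h
        rw [h]
        refine Finset.sum_eq_zero fun i _ => Finset.sum_eq_zero fun j _ => ?_
        rw [hstd2, smul_zero]
      rw [show ((X, Y) : Matrix (Fin (2 * n + 1)) (Fin (2 * m + 1)) ℂ ×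
          Matrix (Fin (2 * n + 1)) (Fin (2 * m + 1)) ℂ) = (X, 0) + (0, Y) by
        rw [Prod.mk_add_mk, add_zero, zero_add], map_add, hXpart, hYpart, add_zero]
    exact hfx hfall


end
end

section
/- Let n, m be positive integers and λ ∈ ℂ. Then the linear map (S,R) ↦ (R^T Λ_m(0) + Δ_n S, R^T Δ_m + Λ_n(λ) S), from ℂ^{n×m} × ℂ^{m×n} to ℂ^{n×m} × ℂ^{n×m}, is surjective; i.e., every pair (A,B) of n×m complex matrices can be written as A = R^T Λ_m(0) + Δ_n S and B = R^T Δ_m + Λ_n(λ) S for some S ∈ ℂ^{n×m} and R ∈ ℂ^{m×n}. (Hence the off-diagonal blocks of the miniversal deformation between summands H_n(λ) and K_m are zero.) -/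
open Matrix

noncomputable section

/-- Auxiliary column recursion solving the system. -/
def colAux (n : ℕ) (lam : ℂ) (a b : ℕ → Fin n → ℂ) : ℕ → Fin n → ℂ
  | 0 => fun i => a 0 i
  | j + 1 => fun i =>
      a (j + 1) i - b j i + lam * colAux n lam a b j i +
        (if h : (i : ℕ) = 0 then 0
         else colAux n lam a b j ⟨(i : ℕ) - 1, by have := i.isLt; omega⟩)

lemma delM_mul {n m : ℕ} (S : Matrix (Fin n) (Fin m) ℂ) (i : Fin n) (j : Fin m) :
    (delM n * S) i j = S ⟨n - 1 - (i : ℕ), by have := i.isLt; omega⟩ j := by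
  have hi := i.isLt
  rw [Matrix.mul_apply]
  rw [Fintype.sum_eq_single (⟨n - 1 - (i : ℕ), by omega⟩ : Fin n)]
  · simp only [delM, Matrix.of_apply, Fin.val_mk]
    rw [if_pos (by omega), one_mul]
  · intro k hk
    simp only [delM, Matrix.of_apply]
    rw [if_neg, zero_mul]
    intro hc
    exact hk (Fin.ext (by simp only [Fin.val_mk]; omega))

lemma lamM0_mul {n m : ℕ} (S : Matrix (Fin n) (Fin m) ℂ) (i : Fin n) (j : Fin m) :
    (lamM n 0 * S) i j =
      if h : (i : ℕ) = 0 then 0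
      else S ⟨n - (i : ℕ), by have := i.isLt; omega⟩ j := by
  have hi := i.isLt
  by_cases h0 : (i : ℕ) = 0
  · rw [dif_pos h0, Matrix.mul_apply]
    apply Finset.sum_eq_zero
    intro k _
    simp only [lamM, Matrix.of_apply]
    have hk := k.isLt
    split_ifs with h1 h2
    · rw [zero_mul]
    · omega
    · rw [zero_mul]
  · rw [dif_neg h0, Matrix.mul_apply]
    rw [Fintype.sum_eq_single (⟨n - (i : ℕ), by omega⟩ : Fin n)]
    · simp only [lamM, Matrix.of_apply, Fin.val_mk]
      rw [if_neg (by omega), if_pos (by omega), one_mul]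
    · intro k hk
      simp only [lamM, Matrix.of_apply]
      have hk' := k.isLt
      split_ifs with h1 h2
      · rw [zero_mul]
      · exact absurd (Fin.ext (show (k : ℕ) = n - (i : ℕ) by omega)) hk
      · rw [zero_mul]

lemma lamM_split (n : ℕ) (lam : ℂ) : lamM n lam = lam • delM n + lamM n 0 := by
  ext i j
  simp only [lamM, delM, Matrix.add_apply, Matrix.smul_apply, Matrix.of_apply,
    smul_eq_mul]
  split_ifs <;> ring

lemma lamM_mul {n m : ℕ} (lam : ℂ) (S : Matrix (Fin n) (Fin m) ℂ) (i : Fin n)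
    (j : Fin m) :
    (lamM n lam * S) i j =
      lam * S ⟨n - 1 - (i : ℕ), by have := i.isLt; omega⟩ j +
      (if h : (i : ℕ) = 0 then 0
       else S ⟨n - (i : ℕ), by have := i.isLt; omega⟩ j) := by
  rw [lamM_split, Matrix.add_mul, Matrix.smul_mul, Matrix.add_apply,
    Matrix.smul_apply, delM_mul, lamM0_mul, smul_eq_mul]

lemma transpose_mul_delM {n m : ℕ} (R : Matrix (Fin m) (Fin n) ℂ) (i : Fin n)
    (j : Fin m) :
    (Rᵀ * delM m) i j = R ⟨m - 1 - (j : ℕ), by have := j.isLt; omega⟩ i := by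
  have hj := j.isLt
  rw [Matrix.mul_apply]
  rw [Fintype.sum_eq_single (⟨m - 1 - (j : ℕ), by omega⟩ : Fin m)]
  · simp only [delM, Matrix.of_apply, Fin.val_mk, Matrix.transpose_apply]
    rw [if_pos (by omega), mul_one]
  · intro k hk
    simp only [delM, Matrix.of_apply, Matrix.transpose_apply]
    rw [if_neg, mul_zero]
    intro hc
    exact hk (Fin.ext (by simp only [Fin.val_mk]; omega))

lemma transpose_mul_lamM0 {n m : ℕ} (R : Matrix (Fin m) (Fin n) ℂ) (i : Fin n)
    (j : Fin m) :
    (Rᵀ * lamM m 0) i j =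
      if h : (j : ℕ) = 0 then 0
      else R ⟨m - (j : ℕ), by have := j.isLt; omega⟩ i := by
  have hj := j.isLt
  by_cases h0 : (j : ℕ) = 0
  · rw [dif_pos h0, Matrix.mul_apply]
    apply Finset.sum_eq_zero
    intro k _
    simp only [lamM, Matrix.of_apply, Matrix.transpose_apply]
    have hk := k.isLt
    split_ifs with h1 h2
    · rw [mul_zero]
    · omega
    · rw [mul_zero]
  · rw [dif_neg h0, Matrix.mul_apply]
    rw [Fintype.sum_eq_single (⟨m - (j : ℕ), by omega⟩ : Fin m)]
    · simp only [lamM, Matrix.of_apply, Fin.val_mk, Matrix.transpose_apply]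
      rw [if_neg (by omega), if_pos (by omega), mul_one]
    · intro k hk
      simp only [lamM, Matrix.of_apply, Matrix.transpose_apply]
      have hk' := k.isLt
      split_ifs with h1 h2
      · rw [mul_zero]
      · exact absurd (Fin.ext (show (k : ℕ) = m - (j : ℕ) by omega)) hk
      · rw [mul_zero]

set_option maxHeartbeats 1000000

/-- **Off-diagonal blocks `H_n(λ)` vs `K_m`.** The map
`(S, R) ↦ (Rᵀ Λ_m(0) + Δ_n S, Rᵀ Δ_m + Λ_n(λ) S)` is surjective onto pairs of `n × m`
complex matrices; hence the corresponding off-diagonal blocks of the miniversal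
deformation are zero. -/
theorem H_K_offdiagonal (n m : ℕ) (hn : 0 < n) (hm : 0 < m) (lam : ℂ)
    (A B : Matrix (Fin n) (Fin m) ℂ) :
    ∃ (S : Matrix (Fin n) (Fin m) ℂ) (R : Matrix (Fin m) (Fin n) ℂ),
      A = Rᵀ * lamM m 0 + delM n * S ∧ B = Rᵀ * delM m + lamM n lam * S := by
  classical
  set a : ℕ → Fin n → ℂ := fun j i => if h : j < m then A i ⟨j, h⟩ else 0 with ha
  set b : ℕ → Fin n → ℂ := fun j i => if h : j < m then B i ⟨j, h⟩ else 0 with hb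
  set col : ℕ → Fin n → ℂ := colAux n lam a b with hcol
  refine ⟨Matrix.of fun i j =>
      col (j : ℕ) ⟨n - 1 - (i : ℕ), by have := i.isLt; omega⟩,
    Matrix.of fun k i =>
      b (m - 1 - (k : ℕ)) i - lam * col (m - 1 - (k : ℕ)) i -
        (if h : (i : ℕ) = 0 then 0
         else col (m - 1 - (k : ℕ)) ⟨(i : ℕ) - 1, by have := i.isLt; omega⟩),
    ?_, ?_⟩
  · ext i j
    have hi := i.isLt
    have hj := j.isLt
    rw [Matrix.add_apply, transpose_mul_lamM0, delM_mul]
    simp only [Matrix.of_apply, Fin.val_mk]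
    have hii : (⟨n - 1 - (n - 1 - (i : ℕ)), by omega⟩ : Fin n) = i :=
      Fin.ext (by simp; omega)
    rw [hii]
    by_cases hj0 : (j : ℕ) = 0
    · rw [dif_pos hj0, zero_add]
      have hj' : j = ⟨0, hm⟩ := Fin.ext hj0
      rw [hj']
      show A i ⟨0, hm⟩ = a 0 i
      simp only [ha, dif_pos hm]
    · rw [dif_neg hj0]
      obtain ⟨jp, hjp⟩ : ∃ jp, (j : ℕ) = jp + 1 := ⟨(j : ℕ) - 1, by omega⟩
      rw [show m - 1 - (m - (j : ℕ)) = jp by omega, hjp]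
      have hunf : col (jp + 1) i =
          a (jp + 1) i - b jp i + lam * col jp i +
            (if h : (i : ℕ) = 0 then 0
             else col jp ⟨(i : ℕ) - 1, by omega⟩) := rfl
      rw [hunf]
      rw [show a (jp + 1) i = A i j from by
        simp only [ha, dif_pos (show jp + 1 < m by omega)]
        congr 1
        exact Fin.ext (by simp [hjp])]
      by_cases hi0 : (i : ℕ) = 0
      · simp only [dif_pos hi0]; ring
      · simp only [dif_neg hi0]; ring
  · ext i j
    have hi := i.isLt
    have hj := j.isLt
    rw [Matrix.add_apply, transpose_mul_delM, lamM_mul]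
    simp only [Matrix.of_apply, Fin.val_mk]
    rw [show m - 1 - (m - 1 - (j : ℕ)) = (j : ℕ) by omega]
    have hbB : b (j : ℕ) i = B i j := by
      simp only [hb]
      rw [dif_pos hj, Fin.eta]
    rw [hbB]
    have hii : (⟨n - 1 - (n - 1 - (i : ℕ)), by omega⟩ : Fin n) = i :=
      Fin.ext (by simp; omega)
    rw [hii]
    by_cases hi0 : (i : ℕ) = 0
    · simp only [dif_pos hi0]; ring
    · simp only [dif_neg hi0]
      rw [show (⟨n - 1 - (n - (i : ℕ)), by omega⟩ : Fin n) =
          (⟨(i : ℕ) - 1, by omega⟩ : Fin n) from Fin.ext (by simp; omega)]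
      ring

end
end
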